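/- arXiv:1904.00186 — 8 statements merged into one kernel-verified Lean document; each statement's English description precedes it below -/
import Mathlib

section
/- (Lemma 1) Let K be a nondegenerate triangle and let C ≥ 0 be a constant such that ‖w‖_K ≤ C·‖∇w‖_K for all w ∈ V_CR(K). Then ‖∇u‖_K ≤ C·‖D²u‖_K for all u ∈ V_FM(K). In particular, the optimal constants satisfy C₁(K) ≤ C_CR(K) for every triangle K. -/
open MeasureTheory Real

noncomputable section

/-- Points of the plane. -/
abbrev Pt : Type := ℝ × ℝ

/-- The closed triangle with vertices `O`, `A`, `B`. -/
def Tri (O A B : Pt) : Set Pt := convexHull ℝ {O, A, B}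

/-- The triangle with vertices `O`, `A`, `B` is nondegenerate. -/
def Nondeg (O A B : Pt) : Prop := ¬ Collinear ℝ ({O, A, B} : Set Pt)

/-- Euclidean length of a vector of the plane. -/
def elen (v : Pt) : ℝ := Real.sqrt (v.1 ^ 2 + v.2 ^ 2)

/-- Partial derivative in the `x` direction. -/
def pdx (u : Pt → ℝ) (p : Pt) : ℝ := fderiv ℝ u p (1, 0)

/-- Partial derivative in the `y` direction. -/
def pdy (u : Pt → ℝ) (p : Pt) : ℝ := fderiv ℝ u p (0, 1)

/-- `‖u‖_K²  = ∫_K u² dxdy`. -/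
def l2sq (u : Pt → ℝ) (K : Set Pt) : ℝ := ∫ p in K, (u p) ^ 2

/-- `‖∇u‖_K² = ∫_K (u_x² + u_y²) dxdy`. -/
def h1sq (u : Pt → ℝ) (K : Set Pt) : ℝ := ∫ p in K, ((pdx u p) ^ 2 + (pdy u p) ^ 2)

/-- `‖D²u‖_K² = ∫_K (u_xx² + u_xy² + u_yx² + u_yy²) dxdy`. -/
def h2sq (u : Pt → ℝ) (K : Set Pt) : ℝ :=
  ∫ p in K, ((pdx (pdx u) p) ^ 2 + (pdy (pdx u) p) ^ 2
    + (pdx (pdy u) p) ^ 2 + (pdy (pdy u) p) ^ 2)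

/-- `‖u‖_K`. -/
def l2norm (u : Pt → ℝ) (K : Set Pt) : ℝ := Real.sqrt (l2sq u K)

/-- `‖∇u‖_K`. -/
def h1norm (u : Pt → ℝ) (K : Set Pt) : ℝ := Real.sqrt (h1sq u K)

/-- `‖D²u‖_K`. -/
def h2norm (u : Pt → ℝ) (K : Set Pt) : ℝ := Real.sqrt (h2sq u K)

/-- `u` is twice continuously differentiable on an open neighborhood of `K`. -/
def Smooth2 (u : Pt → ℝ) (K : Set Pt) : Prop :=
  ∃ U : Set Pt, IsOpen U ∧ K ⊆ U ∧ ContDiffOn ℝ 2 u U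

/-- `w` is continuously differentiable on an open neighborhood of `K`. -/
def Smooth1 (w : Pt → ℝ) (K : Set Pt) : Prop :=
  ∃ U : Set Pt, IsOpen U ∧ K ⊆ U ∧ ContDiffOn ℝ 1 w U

/-- Line integral of `g` along the edge from `P` to `Q`:
`∫_e g ds = |Q − P| ∫₀¹ g(P + t(Q−P)) dt`. -/
def edgeInt (g : Pt → ℝ) (P Q : Pt) : ℝ :=
  elen (Q - P) * ∫ t in (0:ℝ)..1, g (P + t • (Q - P))

/-- Outward unit normal of the edge from `P` to `Q` of the triangle whose third vertex is `R`
(the unit vector perpendicular to `Q − P` pointing away from `R`). -/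
def outNormal (P Q R : Pt) : Pt :=
  (if (Q - P).2 * (R - P).1 - (Q - P).1 * (R - P).2 ≤ 0 then (elen (Q - P))⁻¹
    else -(elen (Q - P))⁻¹) • ((Q - P).2, -((Q - P).1))

/-- The normal derivative `∂u/∂n = ∇u ⋅ n` along the edge from `P` to `Q`,
with `n` the outward normal (w.r.t. third vertex `R`). -/
def normalDeriv (u : Pt → ℝ) (P Q R : Pt) (p : Pt) : ℝ := fderiv ℝ u p (outNormal P Q R)

/-- `u ∈ V_FM(K)` for the triangle `K` with vertices `O`, `A`, `B`: `u` is C² near `K`,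
vanishes at the three vertices, and has vanishing mean normal derivative on each edge. -/
def MemVFM (u : Pt → ℝ) (O A B : Pt) : Prop :=
  Smooth2 u (Tri O A B) ∧ u O = 0 ∧ u A = 0 ∧ u B = 0 ∧
  edgeInt (normalDeriv u O A B) O A = 0 ∧
  edgeInt (normalDeriv u A B O) A B = 0 ∧
  edgeInt (normalDeriv u B O A) B O = 0

/-- `w ∈ V_CR(K)` for the triangle `K` with vertices `O`, `A`, `B`: `w` is C¹ near `K`
and has vanishing mean value on each edge. -/
def MemVCR (w : Pt → ℝ) (O A B : Pt) : Prop :=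
  Smooth1 w (Tri O A B) ∧
  edgeInt w O A = 0 ∧ edgeInt w A B = 0 ∧ edgeInt w B O = 0

/-- The longest edge length of the triangle with vertices `O`, `A`, `B`. -/
def longestEdge (O A B : Pt) : ℝ := max (elen (A - O)) (max (elen (B - A)) (elen (O - B)))

/-- The linear map with matrix `[[1, α], [0, β]]`. -/
def Qmap (α β : ℝ) (p : Pt) : Pt := (p.1 + α * p.2, β * p.2)

/-- The inverse of `Qmap α β` (for `β ≠ 0`). -/
def Qinv (α β : ℝ) (p : Pt) : Pt := (p.1 - (α / β) * p.2, p.2 / β)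


lemma elen_pos {v : Pt} (hv : v ≠ 0) : 0 < elen v := by
  have h : v.1 ≠ 0 ∨ v.2 ≠ 0 := by
    by_contra hcon
    push_neg at hcon
    exact hv (Prod.ext hcon.1 hcon.2)
  have : 0 < v.1 ^ 2 + v.2 ^ 2 := by
    rcases h with h | h
    · positivity
    · positivity
  exact Real.sqrt_pos.mpr this

/-- Key edge lemma: if `u` is C² near the segment `[P,Q]`, vanishes at `P` and `Q`,
and its mean normal derivative on the edge vanishes, then the mean of any fixed
directional derivative on the edge vanishes. -/
lemma edge_fderiv_zero (u : Pt → ℝ) (P Q R : Pt) (hPQ : Q ≠ P)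
    (U : Set Pt) (hU : IsOpen U) (hsub : segment ℝ P Q ⊆ U)
    (hu : ContDiffOn ℝ 2 u U) (hP : u P = 0) (hQ : u Q = 0)
    (hn : edgeInt (normalDeriv u P Q R) P Q = 0) (v : Pt) :
    edgeInt (fun p => fderiv ℝ u p v) P Q = 0 := by
  set e : Pt := Q - P with he_def
  have he : e ≠ 0 := sub_ne_zero.mpr hPQ
  have helen : 0 < elen e := elen_pos he
  have hd : (0:ℝ) < e.1 ^ 2 + e.2 ^ 2 := by
    have := helen
    rw [elen] at this
    nlinarith [Real.sq_sqrt (by positivity : (0:ℝ) ≤ e.1^2 + e.2^2), Real.sqrt_nonneg (e.1^2+e.2^2)]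
  set d : ℝ := e.1 ^ 2 + e.2 ^ 2 with hd_def
  set a : ℝ := (v.1 * e.1 + v.2 * e.2) / d with ha_def
  set b : ℝ := (v.1 * e.2 - v.2 * e.1) / d with hb_def
  have hv : v = a • e + b • ((e.2, -e.1) : Pt) := by
    have hd0 : d ≠ 0 := ne_of_gt hd
    apply Prod.ext <;> simp [ha_def, hb_def, Prod.smul_def] <;> field_simp <;> ring
  set c : ℝ := (if (Q - P).2 * (R - P).1 - (Q - P).1 * (R - P).2 ≤ 0 then (elen (Q - P))⁻¹
    else -(elen (Q - P))⁻¹) with hc_def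
  have hc : c ≠ 0 := by
    rw [hc_def]
    split
    · exact inv_ne_zero (ne_of_gt helen)
    · exact neg_ne_zero.mpr (inv_ne_zero (ne_of_gt helen))
  have hnorm : outNormal P Q R = c • ((e.2, -e.1) : Pt) := rfl
  have pointwise : ∀ p : Pt,
      fderiv ℝ u p v = a * fderiv ℝ u p e + (b * c⁻¹) * normalDeriv u P Q R p := by
    intro p
    have h1 : fderiv ℝ u p v
        = a * fderiv ℝ u p e + b * fderiv ℝ u p ((e.2, -e.1) : Pt) := by
      conv_lhs => rw [hv]
      rw [map_add, _root_.map_smul, _root_.map_smul]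
      simp
    have h2 : normalDeriv u P Q R p = c * fderiv ℝ u p ((e.2, -e.1) : Pt) := by
      rw [normalDeriv, hnorm, _root_.map_smul]; simp
    rw [h1, h2]
    field_simp
  -- the path along the edge
  set γ : ℝ → Pt := fun t => P + t • e with hγ_def
  have hγc : Continuous γ := by
    apply Continuous.add continuous_const
    exact (continuous_id.smul continuous_const)
  have hγmem : ∀ t ∈ Set.Icc (0:ℝ) 1, γ t ∈ U := by
    intro t ht
    apply hsub
    rw [segment_eq_image']
    exact ⟨t, ht, rfl⟩
  have hfc : ContinuousOn (fderiv ℝ u) U :=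
    hu.continuousOn_fderiv_of_isOpen hU (by norm_num)
  have hmapsTo : Set.MapsTo γ (Set.Icc (0:ℝ) 1) U := hγmem
  have hTcont : ContinuousOn (fun t => fderiv ℝ u (γ t) e) (Set.Icc (0:ℝ) 1) :=
    ((hfc.comp hγc.continuousOn hmapsTo).clm_apply continuousOn_const)
  have hNcont : ContinuousOn (fun t => normalDeriv u P Q R (γ t)) (Set.Icc (0:ℝ) 1) :=
    ((hfc.comp hγc.continuousOn hmapsTo).clm_apply continuousOn_const)
  have hTint : IntervalIntegrable (fun t => fderiv ℝ u (γ t) e) volume 0 1 :=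
    ContinuousOn.intervalIntegrable (by rw [Set.uIcc_of_le zero_le_one]; exact hTcont)
  have hNint : IntervalIntegrable (fun t => normalDeriv u P Q R (γ t)) volume 0 1 :=
    ContinuousOn.intervalIntegrable (by rw [Set.uIcc_of_le zero_le_one]; exact hNcont)
  have hderiv : ∀ t ∈ Set.uIcc (0:ℝ) 1,
      HasDerivAt (fun s => u (γ s)) (fderiv ℝ u (γ t) e) t := by
    intro t ht
    have htI : t ∈ Set.Icc (0:ℝ) 1 := by rwa [Set.uIcc_of_le zero_le_one] at ht
    have hmem := hγmem t htI
    have hdiff : DifferentiableAt ℝ u (γ t) :=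
      (hu.contDiffAt (hU.mem_nhds hmem)).differentiableAt (by norm_num)
    have h1 : HasDerivAt γ e t := by
      have h2 : HasDerivAt (fun s : ℝ => s • e) ((1:ℝ) • e) t := (hasDerivAt_id t).smul_const e
      rw [one_smul] at h2
      exact (h2.const_add P)
    exact hdiff.hasFDerivAt.comp_hasDerivAt t h1
  have hγ1 : γ 1 = Q := by simp [hγ_def, he_def]
  have hγ0 : γ 0 = P := by simp [hγ_def]
  have hTzero : (∫ t in (0:ℝ)..1, fderiv ℝ u (γ t) e) = 0 := by
    rw [intervalIntegral.integral_eq_sub_of_hasDerivAt hderiv hTint, hγ1, hγ0, hP, hQ, sub_zero]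
  have hNzero : (∫ t in (0:ℝ)..1, normalDeriv u P Q R (γ t)) = 0 := by
    rw [edgeInt] at hn
    rcases mul_eq_zero.mp hn with h | h
    · exact absurd h (ne_of_gt helen)
    · exact h
  rw [edgeInt]
  have hint_eq : (∫ t in (0:ℝ)..1, (fun p => fderiv ℝ u p v) (P + t • (Q - P)))
      = ∫ t in (0:ℝ)..1, (a * fderiv ℝ u (γ t) e + (b * c⁻¹) * normalDeriv u P Q R (γ t)) := by
    apply intervalIntegral.integral_congr
    intro t _
    exact pointwise (γ t)
  rw [hint_eq, intervalIntegral.integral_add (hTint.const_mul a) (hNint.const_mul (b * c⁻¹)),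
    intervalIntegral.integral_const_mul, intervalIntegral.integral_const_mul, hTzero, hNzero]
  ring

/-- Lemma 1: if `‖w‖_K ≤ C ‖∇w‖_K` for all `w ∈ V_CR(K)`, then
`‖∇u‖_K ≤ C ‖D²u‖_K` for all `u ∈ V_FM(K)`; i.e. `C₁(K) ≤ C_CR(K)`. -/
theorem stmt_4 (O A B : Pt) (hK : Nondeg O A B) (C : ℝ) (hC : 0 ≤ C)
    (hCR : ∀ w : Pt → ℝ, MemVCR w O A B →
      l2norm w (Tri O A B) ≤ C * h1norm w (Tri O A B)) :
    ∀ u : Pt → ℝ, MemVFM u O A B →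
      h1norm u (Tri O A B) ≤ C * h2norm u (Tri O A B) := by
  intro u hu
  obtain ⟨⟨U, hU, hKU, huC2⟩, hO, hA, hB, hnOA, hnAB, hnBO⟩ := hu
  set K : Set Pt := Tri O A B with hK_def
  -- vertices are distinct
  have hAO : A ≠ O := by
    rintro rfl
    exact hK ((collinear_pair ℝ A B).subset (by intro p hp; simp at hp ⊢; tauto))
  have hBA : B ≠ A := by
    rintro rfl
    exact hK ((collinear_pair ℝ O B).subset (by intro p hp; simp at hp ⊢; tauto))
  have hOB : O ≠ B := by
    rintro rfl
    exact hK ((collinear_pair ℝ O A).subset (by intro p hp; simp at hp ⊢; tauto))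
  -- segments are inside the triangle, hence inside U
  have hseg : ∀ P Q : Pt, P ∈ ({O, A, B} : Set Pt) → Q ∈ ({O, A, B} : Set Pt) →
      segment ℝ P Q ⊆ U := by
    intro P Q hP hQ
    refine subset_trans ?_ hKU
    rw [← convexHull_pair]
    refine convexHull_mono ?_
    intro p hp
    simp only [Set.mem_insert_iff, Set.mem_singleton_iff] at hp hP hQ ⊢
    rcases hp with rfl | rfl <;> tauto
  have hsOA : segment ℝ O A ⊆ U := hseg O A (by simp) (by simp)
  have hsAB : segment ℝ A B ⊆ U := hseg A B (by simp) (by simp)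
  have hsBO : segment ℝ B O ⊆ U := hseg B O (by simp) (by simp)
  -- the partial derivatives are in V_CR
  have hpdC1 : ∀ v : Pt, ContDiffOn ℝ 1 (fun p => fderiv ℝ u p v) U :=
    fun v => (huC2.fderiv_of_isOpen hU (by norm_num)).clm_apply contDiffOn_const
  have hVCR : ∀ v : Pt, MemVCR (fun p => fderiv ℝ u p v) O A B := by
    intro v
    refine ⟨⟨U, hU, hKU, hpdC1 v⟩, ?_, ?_, ?_⟩
    · exact edge_fderiv_zero u O A B hAO U hU hsOA huC2 hO hA hnOA v
    · exact edge_fderiv_zero u A B O hBA U hU hsAB huC2 hA hB hnAB v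
    · exact edge_fderiv_zero u B O A hOB U hU hsBO huC2 hB hO hnBO v
  have hx := hCR _ (hVCR (1, 0))
  have hy := hCR _ (hVCR (0, 1))
  -- compactness and integrability
  have hKcomp : IsCompact K := (Set.toFinite _).isCompact_convexHull (𝕜 := ℝ)
  have hcont1 : ∀ v : Pt, ContinuousOn (fun p => fderiv ℝ u p v) K :=
    fun v => ((hpdC1 v).continuousOn).mono hKU
  have hcont2 : ∀ v w : Pt, ContinuousOn (fun p => fderiv ℝ (fun q => fderiv ℝ u q v) p w) K := by
    intro v w
    have : ContinuousOn (fderiv ℝ (fun q => fderiv ℝ u q v)) U :=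
      (hpdC1 v).continuousOn_fderiv_of_isOpen hU le_rfl
    exact ((this.clm_apply continuousOn_const).mono hKU)
  have hint1 : ∀ v : Pt, IntegrableOn (fun p => (fderiv ℝ u p v) ^ 2) K volume :=
    fun v => ((hcont1 v).pow 2).integrableOn_compact hKcomp
  have hint2 : ∀ v w : Pt,
      IntegrableOn (fun p => (fderiv ℝ (fun q => fderiv ℝ u q v) p w) ^ 2) K volume :=
    fun v w => ((hcont2 v w).pow 2).integrableOn_compact hKcomp
  -- split the integrals
  have hpdx_eq : pdx u = fun p => fderiv ℝ u p ((1, 0) : Pt) := rfl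
  have hpdy_eq : pdy u = fun p => fderiv ℝ u p ((0, 1) : Pt) := rfl
  have hsum1 : h1sq u K = l2sq (pdx u) K + l2sq (pdy u) K :=
    integral_add (hint1 (1,0)) (hint1 (0,1))
  have hsum2 : h2sq u K = h1sq (pdx u) K + h1sq (pdy u) K := by
    have step : h2sq u K = ∫ p in K,
        (((pdx (pdx u) p) ^ 2 + (pdy (pdx u) p) ^ 2)
          + ((pdx (pdy u) p) ^ 2 + (pdy (pdy u) p) ^ 2)) := by
      rw [h2sq]
      apply integral_congr_ae
      filter_upwards with p
      ring
    rw [step]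
    exact integral_add ((hint2 (1,0) (1,0)).add (hint2 (1,0) (0,1)))
      ((hint2 (0,1) (1,0)).add (hint2 (0,1) (0,1)))
  -- nonnegativity
  have hnn : ∀ (w : Pt → ℝ), (0:ℝ) ≤ l2sq w K := fun w => integral_nonneg (fun p => sq_nonneg _)
  have hnn1 : ∀ (w : Pt → ℝ), (0:ℝ) ≤ h1sq w K :=
    fun w => integral_nonneg (fun p => by positivity)
  have hnn2 : (0:ℝ) ≤ h2sq u K := integral_nonneg (fun p => by positivity)
  -- square the CR inequalities
  have hsq : ∀ w : Pt → ℝ, l2norm w K ≤ C * h1norm w K → l2sq w K ≤ C ^ 2 * h1sq w K := by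
    intro w h
    have h2 : (l2norm w K) ^ 2 ≤ (C * h1norm w K) ^ 2 :=
      pow_le_pow_left₀ (Real.sqrt_nonneg _) h 2
    rw [l2norm, h1norm, Real.sq_sqrt (hnn w), mul_pow, Real.sq_sqrt (hnn1 w)] at h2
    exact h2
  have hxs : l2sq (pdx u) K ≤ C ^ 2 * h1sq (pdx u) K := hsq (pdx u) hx
  have hys : l2sq (pdy u) K ≤ C ^ 2 * h1sq (pdy u) K := hsq (pdy u) hy
  have hmain : h1sq u K ≤ C ^ 2 * h2sq u K := by
    rw [hsum1, hsum2]
    nlinarith [hxs, hys]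
  calc h1norm u K = Real.sqrt (h1sq u K) := rfl
    _ ≤ Real.sqrt (C ^ 2 * h2sq u K) := Real.sqrt_le_sqrt hmain
    _ = C * h2norm u K := by
        rw [Real.sqrt_mul (sq_nonneg C), Real.sqrt_sq hC, h2norm]
end
end

section
/- Let K be a nondegenerate triangle and u ∈ V_FM(K). Then both partial derivatives u_x and u_y belong to V_CR(K); that is, for each edge e_i of K (i = 1,2,3) one has ∫_{e_i} u_x ds = 0 and ∫_{e_i} u_y ds = 0. -/
open MeasureTheory Real

noncomputable section

section AuxStmt5

lemma edge_key_stmt5 {u : Pt → ℝ} {U : Set Pt} (hU : IsOpen U) (hu : ContDiffOn ℝ 2 u U)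
    (P Q R : Pt) (hPQ : P ≠ Q) (hseg : segment ℝ P Q ⊆ U)
    (hP : u P = 0) (hQ : u Q = 0) (hnd : edgeInt (normalDeriv u P Q R) P Q = 0) :
    edgeInt (pdx u) P Q = 0 ∧ edgeInt (pdy u) P Q = 0 := by
  set d : Pt := Q - P with hdve
  have hd : d ≠ 0 := sub_ne_zero.2 hPQ.symm
  set L : ℝ := elen d with hLdef
  have hsum : 0 < d.1 ^ 2 + d.2 ^ 2 := by
    have h12 : d.1 ≠ 0 ∨ d.2 ≠ 0 := by
      by_contra hc
      push_neg at hc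
      exact hd (Prod.ext hc.1 hc.2)
    rcases h12 with h | h <;> positivity
  have hLpos : 0 < L := Real.sqrt_pos.2 hsum
  have hL2 : L ^ 2 = d.1 ^ 2 + d.2 ^ 2 := Real.sq_sqrt hsum.le
  have hLne : L ≠ 0 := hLpos.ne'
  set s : ℝ := (if d.2 * (R - P).1 - d.1 * (R - P).2 ≤ 0 then L⁻¹ else -L⁻¹) with hsdef
  have hs : s ≠ 0 := by
    rw [hsdef]; split
    · exact inv_ne_zero hLne
    · simpa using inv_ne_zero hLne
  have hn : outNormal P Q R = s • ((d.2, -d.1) : Pt) := rfl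
  set γ : ℝ → Pt := fun t => P + t • d with hγdef
  have hmem : ∀ t ∈ Set.Icc (0:ℝ) 1, γ t ∈ U := by
    intro t ht
    exact hseg (by rw [segment_eq_image']; exact ⟨t, ht, rfl⟩)
  have hγc : Continuous γ := by fun_prop
  have hcf : ContinuousOn (fderiv ℝ u) U :=
    hu.continuousOn_fderiv_of_isOpen hU one_le_two
  have hii : ∀ v : Pt, IntervalIntegrable (fun t => fderiv ℝ u (γ t) v) volume 0 1 := by
    intro v
    apply ContinuousOn.intervalIntegrable
    rw [Set.uIcc_of_le (by norm_num : (0:ℝ) ≤ 1)]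
    exact (hcf.comp hγc.continuousOn hmem).clm_apply continuousOn_const
  have hderiv : ∀ t ∈ Set.uIcc (0:ℝ) 1,
      HasDerivAt (fun t => u (γ t)) (fderiv ℝ u (γ t) d) t := by
    intro t ht
    rw [Set.uIcc_of_le (by norm_num : (0:ℝ) ≤ 1)] at ht
    have h1 : HasFDerivAt u (fderiv ℝ u (γ t)) (γ t) :=
      ((hu.contDiffAt (hU.mem_nhds (hmem t ht))).differentiableAt (by norm_num)).hasFDerivAt
    have h2 : HasDerivAt γ d t := by
      simpa [hγdef] using ((hasDerivAt_id t).smul_const d).const_add P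
    exact h1.comp_hasDerivAt t h2
  have hint_d : ∫ t in (0:ℝ)..1, fderiv ℝ u (γ t) d = 0 := by
    rw [intervalIntegral.integral_eq_sub_of_hasDerivAt hderiv (hii d)]
    have h1 : γ 1 = Q := by simp [hγdef, hdve]
    have h0 : γ 0 = P := by simp [hγdef]
    rw [h1, h0, hP, hQ, sub_zero]
  have hint_n : ∫ t in (0:ℝ)..1, fderiv ℝ u (γ t) ((d.2, -d.1) : Pt) = 0 := by
    have h0 : ∫ t in (0:ℝ)..1, normalDeriv u P Q R (γ t) = 0 := by
      have h' := hnd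
      rw [edgeInt] at h'
      exact (mul_eq_zero.1 h').resolve_left hLne
    have heq : ∀ t : ℝ, normalDeriv u P Q R (γ t)
        = s * fderiv ℝ u (γ t) ((d.2, -d.1) : Pt) := by
      intro t
      rw [normalDeriv, hn, ContinuousLinearMap.map_smul, smul_eq_mul]
    have hmul : s * ∫ t in (0:ℝ)..1, fderiv ℝ u (γ t) ((d.2, -d.1) : Pt) = 0 := by
      calc s * ∫ t in (0:ℝ)..1, fderiv ℝ u (γ t) ((d.2, -d.1) : Pt)
          = ∫ t in (0:ℝ)..1, s * fderiv ℝ u (γ t) ((d.2, -d.1) : Pt) :=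
            (intervalIntegral.integral_const_mul _ _).symm
        _ = ∫ t in (0:ℝ)..1, normalDeriv u P Q R (γ t) :=
            intervalIntegral.integral_congr (fun t _ => (heq t).symm)
        _ = 0 := h0
    exact (mul_eq_zero.1 hmul).resolve_left hs
  have main : ∀ (a b : ℝ) (v : Pt), v = a • d + b • ((d.2, -d.1) : Pt) →
      edgeInt (fun p => fderiv ℝ u p v) P Q = 0 := by
    intro a b v hv
    have hEI : edgeInt (fun p => fderiv ℝ u p v) P Q
        = L * ∫ t in (0:ℝ)..1, fderiv ℝ u (γ t) v := rfl
    rw [hEI]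
    have hptw : (fun t => fderiv ℝ u (γ t) v)
        = fun t => a * fderiv ℝ u (γ t) d + b * fderiv ℝ u (γ t) ((d.2, -d.1) : Pt) := by
      funext t
      rw [hv, map_add, ContinuousLinearMap.map_smul, ContinuousLinearMap.map_smul,
        smul_eq_mul, smul_eq_mul]
    rw [hptw, intervalIntegral.integral_add ((hii d).const_mul a) ((hii _).const_mul b),
      intervalIntegral.integral_const_mul, intervalIntegral.integral_const_mul,
      hint_d, hint_n]
    ring
  constructor
  · apply main (d.1 / L ^ 2) (d.2 / L ^ 2)
    apply Prod.ext <;> simp [Prod.smul_def, smul_eq_mul] <;> field_simp <;> nlinarith [hL2]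
  · apply main (d.2 / L ^ 2) (-(d.1 / L ^ 2))
    apply Prod.ext <;> simp [Prod.smul_def, smul_eq_mul] <;> field_simp <;> nlinarith [hL2]

lemma smooth1_of_smooth2_pd {u : Pt → ℝ} {K : Set Pt} (h : Smooth2 u K) :
    Smooth1 (pdx u) K ∧ Smooth1 (pdy u) K := by
  obtain ⟨U, hUo, hKU, hu⟩ := h
  have hu' : ContDiffOn ℝ (1 + 1) u U := by
    have h11 : ((1 : WithTop ℕ∞) + 1) = 2 := by norm_num
    rw [h11]; exact hu
  have hf : ContDiffOn ℝ 1 (fderiv ℝ u) U :=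
    ((contDiffOn_succ_iff_fderiv_of_isOpen hUo).1 hu').2.2
  exact ⟨⟨U, hUo, hKU, hf.clm_apply contDiffOn_const⟩,
    ⟨U, hUo, hKU, hf.clm_apply contDiffOn_const⟩⟩

end AuxStmt5

/-- if `u ∈ V_FM(K)` then `u_x ∈ V_CR(K)` and `u_y ∈ V_CR(K)`;
in particular `∫_{e_i} u_x ds = 0` and `∫_{e_i} u_y ds = 0` on each edge. -/
theorem stmt_5 (O A B : Pt) (hK : Nondeg O A B) (u : Pt → ℝ) (hu : MemVFM u O A B) :
    MemVCR (pdx u) O A B ∧ MemVCR (pdy u) O A B := by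
  obtain ⟨hsm, hO, hA, hB, h1, h2, h3⟩ := hu
  obtain ⟨hsx, hsy⟩ := smooth1_of_smooth2_pd hsm
  obtain ⟨U, hUo, hKU, hC2⟩ := hsm
  have hOA : O ≠ A := by
    rintro rfl; exact hK ((collinear_pair ℝ O B).subset (by intro p hp; simp at hp ⊢; tauto))
  have hAB : A ≠ B := by
    rintro rfl; exact hK ((collinear_pair ℝ O A).subset (by intro p hp; simp at hp ⊢; tauto))
  have hBO : B ≠ O := by
    rintro rfl; exact hK ((collinear_pair ℝ B A).subset (by intro p hp; simp at hp ⊢; tauto))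
  have hmemO : O ∈ Tri O A B := subset_convexHull ℝ _ (by simp)
  have hmemA : A ∈ Tri O A B := subset_convexHull ℝ _ (by simp)
  have hmemB : B ∈ Tri O A B := subset_convexHull ℝ _ (by simp)
  have hcx : Convex ℝ (Tri O A B) := convex_convexHull ℝ _
  have sOA : segment ℝ O A ⊆ U := fun p hp => hKU (hcx.segment_subset hmemO hmemA hp)
  have sAB : segment ℝ A B ⊆ U := fun p hp => hKU (hcx.segment_subset hmemA hmemB hp)
  have sBO : segment ℝ B O ⊆ U := fun p hp => hKU (hcx.segment_subset hmemB hmemO hp)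
  have e1 := edge_key_stmt5 hUo hC2 O A B hOA sOA hO hA h1
  have e2 := edge_key_stmt5 hUo hC2 A B O hAB sAB hA hB h2
  have e3 := edge_key_stmt5 hUo hC2 B O A hBO sBO hB hO h3
  exact ⟨⟨hsx, e1.1, e2.1, e3.1⟩, ⟨hsy, e1.2, e2.2, e3.2⟩⟩
end
end

section
/- (Lemma 2(b)) Let K ⊂ ℝ² be a nondegenerate triangle, let Q be the linear map given by the matrix [[1, α], [0, β]] with β > 0, let K̃ = Q(K), and set γ = α² + β² + 1. For any u : ℝ² → ℝ twice continuously differentiable on an open neighborhood of the closed triangle K, with ũ = u ∘ Q⁻¹, one has ((γ − √(γ² − 4β²))/2)·‖∇ũ‖²_{K̃} ≤ β·‖∇u‖²_K ≤ ((γ + √(γ² − 4β²))/2)·‖∇ũ‖²_{K̃}. -/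
open MeasureTheory Real

noncomputable section

/-! ### Auxiliary lemmas for `stmt_7` -/

lemma eig_aux7 (α β : ℝ) (hβ : 0 < β) :
    0 ≤ (α^2+β^2+1)^2 - 4*β^2 := by
  nlinarith [sq_nonneg (α^2+(β-1)^2), sq_nonneg α, sq_nonneg (β-1)]

lemma eig_low7 (α β x y : ℝ) (hβ : 0 < β) :
    (α^2+β^2+1 - Real.sqrt ((α^2+β^2+1)^2 - 4*β^2))/2 * (x^2+y^2)
      ≤ x^2 + (α*x+β*y)^2 := by
  have hnn := eig_aux7 α β hβ
  set s := Real.sqrt ((α^2+β^2+1)^2-4*β^2) with hsdef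
  have hs0 : 0 ≤ s := Real.sqrt_nonneg _
  have hs2 : s^2 = (α^2+β^2+1)^2 - 4*β^2 := Real.sq_sqrt hnn
  rcases eq_or_lt_of_le hs0 with h0 | hpos
  · have h0' : (0:ℝ) = s^2 := by rw [← h0]; ring
    have hα : α = 0 ∧ β = 1 := by
      constructor <;> nlinarith [sq_nonneg α, sq_nonneg (β-1), sq_nonneg (α^2+(β-1)^2)]
    obtain ⟨ha, hb⟩ := hα
    subst ha; subst hb
    nlinarith [sq_nonneg x, sq_nonneg y, hs0]
  · nlinarith [sq_nonneg ((1+α^2-β^2+s)*x + 2*α*β*y), sq_nonneg (2*α*β*x + (β^2-α^2-1+s)*y),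
      hs2, hpos, mul_pos hpos hpos]

lemma eig_high7 (α β x y : ℝ) (hβ : 0 < β) :
    x^2 + (α*x+β*y)^2
      ≤ (α^2+β^2+1 + Real.sqrt ((α^2+β^2+1)^2 - 4*β^2))/2 * (x^2+y^2) := by
  have hnn := eig_aux7 α β hβ
  set s := Real.sqrt ((α^2+β^2+1)^2-4*β^2) with hsdef
  have hs0 : 0 ≤ s := Real.sqrt_nonneg _
  have hs2 : s^2 = (α^2+β^2+1)^2 - 4*β^2 := Real.sq_sqrt hnn
  rcases eq_or_lt_of_le hs0 with h0 | hpos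
  · have h0' : (0:ℝ) = s^2 := by rw [← h0]; ring
    have hα : α = 0 ∧ β = 1 := by
      constructor <;> nlinarith [sq_nonneg α, sq_nonneg (β-1), sq_nonneg (α^2+(β-1)^2)]
    obtain ⟨ha, hb⟩ := hα
    subst ha; subst hb
    nlinarith [sq_nonneg x, sq_nonneg y, hs0]
  · nlinarith [sq_nonneg ((s+β^2-α^2-1)*x - 2*α*β*y), sq_nonneg (2*α*β*x - (s+1+α^2-β^2)*y),
      hs2, hpos, mul_pos hpos hpos]

/-- `Qmap` as a continuous linear map. -/
def QmL (α β : ℝ) : Pt →L[ℝ] Pt :=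
  (ContinuousLinearMap.fst ℝ ℝ ℝ + α • ContinuousLinearMap.snd ℝ ℝ ℝ).prod
    (β • ContinuousLinearMap.snd ℝ ℝ ℝ)

/-- `Qinv` as a continuous linear map. -/
def QinvL (α β : ℝ) : Pt →L[ℝ] Pt :=
  (ContinuousLinearMap.fst ℝ ℝ ℝ - (α/β) • ContinuousLinearMap.snd ℝ ℝ ℝ).prod
    ((1/β) • ContinuousLinearMap.snd ℝ ℝ ℝ)

lemma QmL_eq (α β : ℝ) : Qmap α β = QmL α β := by
  funext p; simp [QmL, Qmap, smul_eq_mul]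

lemma QinvL_eq (α β : ℝ) : Qinv α β = QinvL α β := by
  funext p
  simp [QinvL, Qinv, smul_eq_mul]
  ring

lemma QmL_det (α β : ℝ) : (QmL α β).det = β := by
  have h : LinearMap.toMatrix (Module.Basis.finTwoProd ℝ) (Module.Basis.finTwoProd ℝ)
      (QmL α β : Pt →ₗ[ℝ] Pt) = !![1, α; 0, β] := by
    ext i j
    rw [LinearMap.toMatrix_apply]
    fin_cases i <;> fin_cases j <;>
      simp [QmL, Module.Basis.finTwoProd, smul_eq_mul]
  rw [ContinuousLinearMap.det, ← LinearMap.det_toMatrix (Module.Basis.finTwoProd ℝ), h,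
    Matrix.det_fin_two_of]
  ring

/-- Lemma 2(b): with `γ = α² + β² + 1`,
`((γ − √(γ²−4β²))/2) ‖∇ũ‖²_{K̃} ≤ β ‖∇u‖²_K ≤ ((γ + √(γ²−4β²))/2) ‖∇ũ‖²_{K̃}`. -/
theorem stmt_7 (O A B : Pt) (hK : Nondeg O A B) (α β : ℝ) (hβ : 0 < β)
    (u : Pt → ℝ) (hu : Smooth2 u (Tri O A B)) :
    ((α ^ 2 + β ^ 2 + 1 - Real.sqrt ((α ^ 2 + β ^ 2 + 1) ^ 2 - 4 * β ^ 2)) / 2) *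
        h1sq (u ∘ Qinv α β) (Qmap α β '' Tri O A B) ≤ β * h1sq u (Tri O A B) ∧
    β * h1sq u (Tri O A B) ≤
      ((α ^ 2 + β ^ 2 + 1 + Real.sqrt ((α ^ 2 + β ^ 2 + 1) ^ 2 - 4 * β ^ 2)) / 2) *
        h1sq (u ∘ Qinv α β) (Qmap α β '' Tri O A B) := by
  obtain ⟨U, hUopen, hKU, hC2⟩ := hu
  set K : Set Pt := Tri O A B with hKdef
  have hβ' : (β:ℝ) ≠ 0 := hβ.ne'
  -- K is compact and measurable
  have hKcomp : IsCompact K := (Set.toFinite ({O, A, B} : Set Pt)).isCompact_convexHull ℝ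
  have hKmeas : MeasurableSet K := hKcomp.isClosed.measurableSet
  -- differentiability facts
  have hdiff : DifferentiableOn ℝ u U := hC2.differentiableOn two_ne_zero
  have hfd_cont : ContinuousOn (fderiv ℝ u) U :=
    hC2.continuousOn_fderiv_of_isOpen hUopen one_le_two
  have hpdx_cont : ContinuousOn (pdx u) U :=
    (ContinuousLinearMap.apply ℝ ℝ (((1:ℝ),(0:ℝ)) : Pt)).continuous.comp_continuousOn hfd_cont
  have hpdy_cont : ContinuousOn (pdy u) U :=
    (ContinuousLinearMap.apply ℝ ℝ (((0:ℝ),(1:ℝ)) : Pt)).continuous.comp_continuousOn hfd_cont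
  -- abbreviations
  set s : ℝ := Real.sqrt ((α ^ 2 + β ^ 2 + 1) ^ 2 - 4 * β ^ 2) with hs
  set F : Pt → ℝ := fun q => (pdx u q)^2 + (-(α/β) * pdx u q + (1/β) * pdy u q)^2 with hF
  set G : Pt → ℝ := fun q => (pdx u q)^2 + (pdy u q)^2 with hG
  -- derivative of the composed function at Qmap q for q ∈ U
  have hkey : ∀ q ∈ U,
      pdx (u ∘ Qinv α β) (Qmap α β q) = pdx u q ∧
      pdy (u ∘ Qinv α β) (Qmap α β q) = -(α/β) * pdx u q + (1/β) * pdy u q := by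
    intro q hq
    have hdq : DifferentiableAt ℝ u q :=
      (hdiff q hq).differentiableAt (hUopen.mem_nhds hq)
    have hq' : HasFDerivAt u (fderiv ℝ u q) q := hdq.hasFDerivAt
    have hQQ : Qinv α β (Qmap α β q) = q := by
      unfold Qinv Qmap
      apply Prod.ext <;> field_simp <;> ring
    have hinv : HasFDerivAt (Qinv α β) (QinvL α β) (Qmap α β q) := by
      rw [QinvL_eq]
      exact (QinvL α β).hasFDerivAt
    have hcomp : HasFDerivAt (u ∘ Qinv α β) ((fderiv ℝ u q).comp (QinvL α β))
        (Qmap α β q) := by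
      refine HasFDerivAt.comp _ ?_ hinv
      rw [hQQ]; exact hq'
    have hfd : fderiv ℝ (u ∘ Qinv α β) (Qmap α β q) = (fderiv ℝ u q).comp (QinvL α β) :=
      hcomp.fderiv
    have h10 : QinvL α β (((1:ℝ),(0:ℝ)) : Pt) = ((1:ℝ),(0:ℝ)) := by
      simp [QinvL]
    have h01 : QinvL α β (((0:ℝ),(1:ℝ)) : Pt) = ((-(α/β) : ℝ), (1/β : ℝ)) := by
      simp [QinvL]
    have hsum : ((-(α/β) : ℝ), (1/β : ℝ)) =
        (-(α/β)) • (((1:ℝ),(0:ℝ)) : Pt) + (1/β) • (((0:ℝ),(1:ℝ)) : Pt) := by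
      simp [Prod.ext_iff]
    constructor
    · rw [pdx, hfd, ContinuousLinearMap.comp_apply, h10]; rfl
    · rw [pdy, hfd, ContinuousLinearMap.comp_apply, h01, hsum, map_add, _root_.map_smul, _root_.map_smul,
        smul_eq_mul, smul_eq_mul]
      rfl
  -- change of variables
  have hQder : ∀ x ∈ K, HasFDerivWithinAt (Qmap α β) (QmL α β) K x := by
    intro x hx
    have : HasFDerivAt (Qmap α β) (QmL α β) x := by
      rw [QmL_eq]; exact (QmL α β).hasFDerivAt
    exact this.hasFDerivWithinAt
  have hinj : Set.InjOn (Qmap α β) K := by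
    intro p _ q _ h
    unfold Qmap at h
    rw [Prod.ext_iff] at h
    obtain ⟨h1, h2⟩ := h
    simp only at h1 h2
    have h2' : p.2 = q.2 := mul_left_cancel₀ hβ' h2
    have h1' : p.1 = q.1 := by rw [h2'] at h1; linarith
    exact Prod.ext h1' h2'
  have hCov : h1sq (u ∘ Qinv α β) (Qmap α β '' K) = ∫ q in K, β * F q := by
    rw [h1sq]
    rw [MeasureTheory.integral_image_eq_integral_abs_det_fderiv_smul volume hKmeas hQder hinj
      (fun p => (pdx (u ∘ Qinv α β) p)^2 + (pdy (u ∘ Qinv α β) p)^2)]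
    refine MeasureTheory.setIntegral_congr_fun hKmeas fun q hq => ?_
    obtain ⟨e1, e2⟩ := hkey q (hKU hq)
    rw [QmL_det, abs_of_pos hβ, smul_eq_mul, e1, e2]
  -- rewrite h1sq u K
  have hH1u : h1sq u K = ∫ q in K, G q := rfl
  -- integrability
  have hFcont : ContinuousOn F K := by
    apply ContinuousOn.mono _ hKU
    apply ContinuousOn.add
    · exact (hpdx_cont.pow 2)
    · exact (((hpdx_cont.const_smul (-(α/β))).add (hpdy_cont.const_smul (1/β))).pow 2)
  have hGcont : ContinuousOn G K := by
    apply ContinuousOn.mono _ hKU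
    exact (hpdx_cont.pow 2).add (hpdy_cont.pow 2)
  have hFint : IntegrableOn (fun q => β * F q) K :=
    (hFcont.const_smul β).integrableOn_compact hKcomp
  have hGint : IntegrableOn (fun q => β * G q) K :=
    (hGcont.const_smul β).integrableOn_compact hKcomp
  have hβG : β * h1sq u K = ∫ q in K, β * G q := by
    rw [hH1u, ← MeasureTheory.integral_const_mul]
  -- pointwise bounds
  have hlow : ∀ q : Pt,
      (α ^ 2 + β ^ 2 + 1 - s) / 2 * (β * F q) ≤ β * G q := by
    intro q
    set a := pdx u q
    set b := pdy u q
    have h1 := eig_low7 α β a (-(α/β) * a + (1/β) * b) hβ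
    have hxy : α * a + β * (-(α/β) * a + (1/β) * b) = b := by field_simp; ring
    rw [hxy] at h1
    have := mul_le_mul_of_nonneg_left h1 hβ.le
    simp only [hF, hG]
    nlinarith [this]
  have hhigh : ∀ q : Pt,
      β * G q ≤ (α ^ 2 + β ^ 2 + 1 + s) / 2 * (β * F q) := by
    intro q
    set a := pdx u q
    set b := pdy u q
    have h1 := eig_high7 α β a (-(α/β) * a + (1/β) * b) hβ
    have hxy : α * a + β * (-(α/β) * a + (1/β) * b) = b := by field_simp; ring
    rw [hxy] at h1
    have := mul_le_mul_of_nonneg_left h1 hβ.le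
    simp only [hF, hG]
    nlinarith [this]
  constructor
  · rw [hCov, hβG, ← MeasureTheory.integral_const_mul]
    exact MeasureTheory.setIntegral_mono_on
      (hFint.const_mul _) hGint hKmeas (fun q _ => hlow q)
  · rw [hCov, hβG, ← MeasureTheory.integral_const_mul]
    exact MeasureTheory.setIntegral_mono_on
      hGint (hFint.const_mul _) hKmeas (fun q _ => hhigh q)
end
end

section
/- (Lemma 2(c)) Let K ⊂ ℝ² be a nondegenerate triangle, let Q be the linear map given by the matrix [[1, α], [0, β]] with β > 0, let K̃ = Q(K), and set γ = α² + β² + 1. For any u : ℝ² → ℝ twice continuously differentiable on an open neighborhood of the closed triangle K, with ũ = u ∘ Q⁻¹, one has ((γ − √(γ² − 4β²))²/4)·‖D²ũ‖²_{K̃} ≤ β·‖D²u‖²_K ≤ ((γ + √(γ² − 4β²))²/4)·‖D²ũ‖²_{K̃}. -/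
open MeasureTheory Real

noncomputable section

/-! ### Auxiliary lemmas for `stmt_8` -/

lemma quad_nonneg {p r m u w : ℝ} (hp : 0 ≤ p) (hr : 0 ≤ r) (hm : p * r = m ^ 2) :
    0 ≤ p * u ^ 2 + 2 * m * (u * w) + r * w ^ 2 := by
  rcases eq_or_lt_of_le hr with h | h
  · have hm0 : m = 0 := by nlinarith [sq_nonneg m]
    subst hm0
    rw [← h]
    nlinarith [mul_nonneg hp (sq_nonneg u)]
  · have key : r * (p * u ^ 2 + 2 * m * (u * w) + r * w ^ 2) = (m * u + r * w) ^ 2 := by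
      linear_combination u ^ 2 * hm
    nlinarith [sq_nonneg (m * u + r * w)]

set_option maxHeartbeats 1000000 in
lemma alg_key (α β s g1 g2 g3 g4 : ℝ) (hβ : 0 < β)
    (hs2 : s ^ 2 = (α ^ 2 + β ^ 2 + 1) ^ 2 - 4 * β ^ 2) (hs0 : 0 ≤ s) :
    ((α ^ 2 + β ^ 2 + 1 - s) / 2) ^ 2 * (g1 ^ 2 + g2 ^ 2 + g3 ^ 2 + g4 ^ 2) ≤
      g1 ^ 2 + (α * g1 + β * g2) ^ 2 + (α * g1 + β * g3) ^ 2 +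
        (α ^ 2 * g1 + α * β * g2 + α * β * g3 + β ^ 2 * g4) ^ 2 ∧
    g1 ^ 2 + (α * g1 + β * g2) ^ 2 + (α * g1 + β * g3) ^ 2 +
        (α ^ 2 * g1 + α * β * g2 + α * β * g3 + β ^ 2 * g4) ^ 2 ≤
      ((α ^ 2 + β ^ 2 + 1 + s) / 2) ^ 2 * (g1 ^ 2 + g2 ^ 2 + g3 ^ 2 + g4 ^ 2) := by
  have hγ2 : 2 * β ≤ α ^ 2 + β ^ 2 + 1 := by nlinarith [sq_nonneg (β - 1)]
  have hγ0 : (0:ℝ) < α ^ 2 + β ^ 2 + 1 := by positivity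
  have hsγ : s ≤ α ^ 2 + β ^ 2 + 1 := by nlinarith
  have h1 : β ^ 2 - 1 - α ^ 2 ≤ s := by nlinarith [sq_nonneg (α * β)]
  have h2 : α ^ 2 + 1 - β ^ 2 ≤ s := by nlinarith [sq_nonneg (α * β)]
  set lam : ℝ := (α ^ 2 + β ^ 2 + 1 - s) / 2 with hlam
  set mu : ℝ := (α ^ 2 + β ^ 2 + 1 + s) / 2 with hmu
  have hlam0 : 0 ≤ lam := by rw [hlam]; linarith
  have hmu0 : 0 ≤ mu := by rw [hmu]; linarith
  have hp : 0 ≤ 1 + α ^ 2 - lam := by rw [hlam]; linarith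
  have hr : 0 ≤ β ^ 2 - lam := by rw [hlam]; linarith
  have hpp : 0 ≤ mu - 1 - α ^ 2 := by rw [hmu]; linarith
  have hrr : 0 ≤ mu - β ^ 2 := by rw [hmu]; linarith
  have hpr : (1 + α ^ 2 - lam) * (β ^ 2 - lam) = (α * β) ^ 2 := by
    rw [hlam]; linear_combination (1/4 : ℝ) * hs2
  have hpprr : (mu - 1 - α ^ 2) * (mu - β ^ 2) = (-(α * β)) ^ 2 := by
    rw [hmu]; linear_combination (1/4 : ℝ) * hs2
  have q1 := quad_nonneg hp hr hpr (u := g1) (w := g2)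
  have q2 := quad_nonneg hp hr hpr (u := α * g1 + β * g3) (w := α * g2 + β * g4)
  have q3 := quad_nonneg hp hr hpr (u := g1) (w := g3)
  have q4 := quad_nonneg hp hr hpr (u := g2) (w := g4)
  have q1' := quad_nonneg hpp hrr hpprr (u := g1) (w := g2)
  have q2' := quad_nonneg hpp hrr hpprr (u := α * g1 + β * g3) (w := α * g2 + β * g4)
  have q3' := quad_nonneg hpp hrr hpprr (u := g1) (w := g3)
  have q4' := quad_nonneg hpp hrr hpprr (u := g2) (w := g4)
  have hB := mul_nonneg hlam0 (add_nonneg q3 q4)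
  have hB' := mul_nonneg hmu0 (add_nonneg q3' q4')
  constructor
  · linarith [q1, q2, hB]
  · linarith [q1', q2', hB']

/-- The linear map `Qmap α β` as a continuous linear map. -/
def QmapCLM (α β : ℝ) : Pt →L[ℝ] Pt :=
  ((ContinuousLinearMap.fst ℝ ℝ ℝ) + α • (ContinuousLinearMap.snd ℝ ℝ ℝ)).prod
    (β • (ContinuousLinearMap.snd ℝ ℝ ℝ))

/-- The linear map `Qinv α β` as a continuous linear map. -/
def QinvCLM (α β : ℝ) : Pt →L[ℝ] Pt :=
  ((ContinuousLinearMap.fst ℝ ℝ ℝ) - (α / β) • (ContinuousLinearMap.snd ℝ ℝ ℝ)).prod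
    (β⁻¹ • (ContinuousLinearMap.snd ℝ ℝ ℝ))

lemma qmap_eq (α β : ℝ) : Qmap α β = ⇑(QmapCLM α β) := by
  funext p
  simp [Qmap, QmapCLM, Prod.ext_iff]

lemma qinv_eq (α β : ℝ) : Qinv α β = ⇑(QinvCLM α β) := by
  funext p
  simp [Qinv, QinvCLM, Prod.ext_iff, div_eq_mul_inv]
  ring

lemma qinv_qmap (α β : ℝ) (hβ : β ≠ 0) (p : Pt) : QinvCLM α β (QmapCLM α β p) = p := by
  simp [QmapCLM, QinvCLM, Prod.ext_iff]
  constructor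
  · field_simp
    ring
  · field_simp

lemma qmap_det (α β : ℝ) : (QmapCLM α β).det = β := by
  have h : LinearMap.toMatrix (Module.Basis.finTwoProd ℝ) (Module.Basis.finTwoProd ℝ)
      ((QmapCLM α β) : Pt →ₗ[ℝ] Pt) = !![1, α; 0, β] := by
    ext i j
    fin_cases i <;> fin_cases j <;>
      simp [LinearMap.toMatrix_apply, QmapCLM, Module.Basis.finTwoProd_zero, Module.Basis.finTwoProd_one]
  rw [ContinuousLinearMap.det, ← LinearMap.det_toMatrix (Module.Basis.finTwoProd ℝ), h,
    Matrix.det_fin_two_of]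
  ring

lemma qinv_apply_e1 (α β : ℝ) : QinvCLM α β (1, 0) = ((1:ℝ), (0:ℝ)) := by
  simp [QinvCLM]

lemma qinv_apply_e2 (α β : ℝ) : QinvCLM α β (0, 1) = (-(α / β), β⁻¹) := by
  simp [QinvCLM]

/-- Derivative of the evaluation of a CLM-valued map. -/
lemma eval_hasFDerivAt {g : Pt → (Pt →L[ℝ] ℝ)} {p : Pt} (hg : DifferentiableAt ℝ g p)
    (w : Pt) :
    HasFDerivAt (fun q => g q w)
      ((ContinuousLinearMap.apply ℝ ℝ w).comp (fderiv ℝ g p)) p :=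
  (ContinuousLinearMap.apply ℝ ℝ w).hasFDerivAt.comp p hg.hasFDerivAt

lemma clm_w2 (α β : ℝ) (L : Pt →L[ℝ] ℝ) :
    L (-(α / β), β⁻¹) = -(α / β) * L (1, 0) + β⁻¹ * L (0, 1) := by
  have h : ((-(α / β), β⁻¹) : Pt) = (-(α / β)) • ((1, 0) : Pt) + β⁻¹ • ((0, 1) : Pt) := by
    simp [Prod.ext_iff]
  rw [h, map_add, _root_.map_smul, _root_.map_smul, smul_eq_mul, smul_eq_mul]

/-- Lemma 2(c): with `γ = α² + β² + 1`,
`((γ − √(γ²−4β²))²/4) ‖D²ũ‖²_{K̃} ≤ β ‖D²u‖²_K ≤ ((γ + √(γ²−4β²))²/4) ‖D²ũ‖²_{K̃}`. -/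

theorem stmt_8 (O A B : Pt) (hK : Nondeg O A B) (α β : ℝ) (hβ : 0 < β)
    (u : Pt → ℝ) (hu : Smooth2 u (Tri O A B)) :
    ((α ^ 2 + β ^ 2 + 1 - Real.sqrt ((α ^ 2 + β ^ 2 + 1) ^ 2 - 4 * β ^ 2)) ^ 2 / 4) *
        h2sq (u ∘ Qinv α β) (Qmap α β '' Tri O A B) ≤ β * h2sq u (Tri O A B) ∧
    β * h2sq u (Tri O A B) ≤
      ((α ^ 2 + β ^ 2 + 1 + Real.sqrt ((α ^ 2 + β ^ 2 + 1) ^ 2 - 4 * β ^ 2)) ^ 2 / 4) *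
        h2sq (u ∘ Qinv α β) (Qmap α β '' Tri O A B) := by
  classical
  obtain ⟨U, hUo, hKU, huU⟩ := hu
  have hβ' : β ≠ 0 := ne_of_gt hβ
  set K : Set Pt := Tri O A B with hKdef
  have hD : (0:ℝ) ≤ (α ^ 2 + β ^ 2 + 1) ^ 2 - 4 * β ^ 2 := by
    nlinarith [mul_nonneg (show (0:ℝ) ≤ α ^ 2 + (β - 1) ^ 2 by positivity)
      (show (0:ℝ) ≤ α ^ 2 + (β + 1) ^ 2 by positivity)]
  set s : ℝ := Real.sqrt ((α ^ 2 + β ^ 2 + 1) ^ 2 - 4 * β ^ 2) with hsdef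
  have hs2 : s ^ 2 = (α ^ 2 + β ^ 2 + 1) ^ 2 - 4 * β ^ 2 := Real.sq_sqrt hD
  have hs0 : 0 ≤ s := Real.sqrt_nonneg _
  -- differentiability infrastructure
  have hfd1 : ContDiffOn ℝ 1 (fderiv ℝ u) U := huU.fderiv_of_isOpen hUo (by norm_num)
  have hdu : ∀ p ∈ U, DifferentiableAt ℝ u p := fun p hp =>
    (huU.contDiffAt (hUo.mem_nhds hp)).differentiableAt (by norm_num)
  have hdfu : ∀ p ∈ U, DifferentiableAt ℝ (fderiv ℝ u) p := fun p hp =>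
    (hfd1.contDiffAt (hUo.mem_nhds hp)).differentiableAt (by norm_num)
  set px : Pt → ℝ := fun p => fderiv ℝ u p ((1:ℝ), (0:ℝ)) with hpxd
  set py : Pt → ℝ := fun p => fderiv ℝ u p ((0:ℝ), (1:ℝ)) with hpyd
  set ax : Pt → ℝ := fun p => fderiv ℝ px p ((1:ℝ), (0:ℝ)) with haxd
  set bx : Pt → ℝ := fun p => fderiv ℝ px p ((0:ℝ), (1:ℝ)) with hbxd
  set cx : Pt → ℝ := fun p => fderiv ℝ py p ((1:ℝ), (0:ℝ)) with hcxd
  set dx : Pt → ℝ := fun p => fderiv ℝ py p ((0:ℝ), (1:ℝ)) with hdxd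
  set W : Pt → ℝ := fun p => (ax p) ^ 2 + (-(α / β) * ax p + β⁻¹ * bx p) ^ 2
    + (-(α / β) * ax p + β⁻¹ * cx p) ^ 2
    + (-(α / β) * (-(α / β) * ax p + β⁻¹ * bx p)
        + β⁻¹ * (-(α / β) * cx p + β⁻¹ * dx p)) ^ 2 with hWd
  have hdpx : ∀ p ∈ U, DifferentiableAt ℝ px p := fun p hp =>
    (eval_hasFDerivAt (hdfu p hp) ((1:ℝ), (0:ℝ))).differentiableAt
  have hdpy : ∀ p ∈ U, DifferentiableAt ℝ py p := fun p hp =>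
    (eval_hasFDerivAt (hdfu p hp) ((0:ℝ), (1:ℝ))).differentiableAt
  set Ut : Set Pt := ⇑(QinvCLM α β) ⁻¹' U with hUtd
  have hUto : IsOpen Ut := hUo.preimage (QinvCLM α β).continuous
  -- first derivatives of the transported function on `Ut`
  have hux : ∀ q ∈ Ut, pdx (u ∘ Qinv α β) q = (px ∘ ⇑(QinvCLM α β)) q := by
    intro q hq
    have hc : HasFDerivAt (u ∘ ⇑(QinvCLM α β))
        ((fderiv ℝ u (QinvCLM α β q)).comp (QinvCLM α β)) q :=
      (hdu _ hq).hasFDerivAt.comp q (QinvCLM α β).hasFDerivAt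
    show fderiv ℝ (u ∘ Qinv α β) q (1, 0) = _
    rw [qinv_eq, hc.fderiv]
    simp only [ContinuousLinearMap.comp_apply, qinv_apply_e1, Function.comp_apply]
    rfl
  have huy : ∀ q ∈ Ut, pdy (u ∘ Qinv α β) q
      = -(α / β) * (px ∘ ⇑(QinvCLM α β)) q + β⁻¹ * (py ∘ ⇑(QinvCLM α β)) q := by
    intro q hq
    have hc : HasFDerivAt (u ∘ ⇑(QinvCLM α β))
        ((fderiv ℝ u (QinvCLM α β q)).comp (QinvCLM α β)) q :=
      (hdu _ hq).hasFDerivAt.comp q (QinvCLM α β).hasFDerivAt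
    show fderiv ℝ (u ∘ Qinv α β) q (0, 1) = _
    rw [qinv_eq, hc.fderiv]
    simp only [ContinuousLinearMap.comp_apply, qinv_apply_e2, Function.comp_apply]
    exact clm_w2 α β _
  -- second derivatives of the transported function on `Ut`
  have hsec : ∀ q ∈ Ut,
      pdx (pdx (u ∘ Qinv α β)) q = ax (QinvCLM α β q) ∧
      pdy (pdx (u ∘ Qinv α β)) q
        = -(α / β) * ax (QinvCLM α β q) + β⁻¹ * bx (QinvCLM α β q) ∧
      pdx (pdy (u ∘ Qinv α β)) q
        = -(α / β) * ax (QinvCLM α β q) + β⁻¹ * cx (QinvCLM α β q) ∧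
      pdy (pdy (u ∘ Qinv α β)) q
        = -(α / β) * (-(α / β) * ax (QinvCLM α β q) + β⁻¹ * bx (QinvCLM α β q))
          + β⁻¹ * (-(α / β) * cx (QinvCLM α β q) + β⁻¹ * dx (QinvCLM α β q)) := by
    intro q hq
    have hev1 : pdx (u ∘ Qinv α β) =ᶠ[nhds q] (px ∘ ⇑(QinvCLM α β)) :=
      Filter.eventuallyEq_of_mem (hUto.mem_nhds hq) hux
    have hcomp1 : HasFDerivAt (px ∘ ⇑(QinvCLM α β))
        ((fderiv ℝ px (QinvCLM α β q)).comp (QinvCLM α β)) q :=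
      (hdpx _ hq).hasFDerivAt.comp q (QinvCLM α β).hasFDerivAt
    have hfd1' : fderiv ℝ (pdx (u ∘ Qinv α β)) q
        = (fderiv ℝ px (QinvCLM α β q)).comp (QinvCLM α β) := by
      rw [hev1.fderiv_eq, hcomp1.fderiv]
    have hev2 : pdy (u ∘ Qinv α β) =ᶠ[nhds q]
        (fun q' => -(α / β) * (px ∘ ⇑(QinvCLM α β)) q' + β⁻¹ * (py ∘ ⇑(QinvCLM α β)) q') :=
      Filter.eventuallyEq_of_mem (hUto.mem_nhds hq) huy
    have hcomp2 : HasFDerivAt (py ∘ ⇑(QinvCLM α β))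
        ((fderiv ℝ py (QinvCLM α β q)).comp (QinvCLM α β)) q :=
      (hdpy _ hq).hasFDerivAt.comp q (QinvCLM α β).hasFDerivAt
    have hsum : HasFDerivAt
        (fun q' => -(α / β) * (px ∘ ⇑(QinvCLM α β)) q' + β⁻¹ * (py ∘ ⇑(QinvCLM α β)) q')
        ((-(α / β)) • ((fderiv ℝ px (QinvCLM α β q)).comp (QinvCLM α β))
          + β⁻¹ • ((fderiv ℝ py (QinvCLM α β q)).comp (QinvCLM α β))) q :=
      (hcomp1.const_mul (-(α / β))).add (hcomp2.const_mul β⁻¹)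
    have hfd2' : fderiv ℝ (pdy (u ∘ Qinv α β)) q
        = (-(α / β)) • ((fderiv ℝ px (QinvCLM α β q)).comp (QinvCLM α β))
          + β⁻¹ • ((fderiv ℝ py (QinvCLM α β q)).comp (QinvCLM α β)) := by
      rw [hev2.fderiv_eq, hsum.fderiv]
    refine ⟨?_, ?_, ?_, ?_⟩
    · show fderiv ℝ (pdx (u ∘ Qinv α β)) q (1, 0) = _
      rw [hfd1']
      simp only [ContinuousLinearMap.comp_apply, qinv_apply_e1]
      rfl
    · show fderiv ℝ (pdx (u ∘ Qinv α β)) q (0, 1) = _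
      rw [hfd1']
      simp only [ContinuousLinearMap.comp_apply, qinv_apply_e2]
      exact clm_w2 α β _
    · show fderiv ℝ (pdy (u ∘ Qinv α β)) q (1, 0) = _
      rw [hfd2']
      simp only [ContinuousLinearMap.add_apply, ContinuousLinearMap.smul_apply,
        ContinuousLinearMap.comp_apply, qinv_apply_e1, smul_eq_mul]
      rfl
    · show fderiv ℝ (pdy (u ∘ Qinv α β)) q (0, 1) = _
      rw [hfd2']
      simp only [ContinuousLinearMap.add_apply, ContinuousLinearMap.smul_apply,
        ContinuousLinearMap.comp_apply, qinv_apply_e2, smul_eq_mul]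
      rw [clm_w2 α β (fderiv ℝ px (QinvCLM α β q)), clm_w2 α β (fderiv ℝ py (QinvCLM α β q))]
  -- measurability and compactness
  have hKc : IsCompact K := (Set.toFinite ({O, A, B} : Set Pt)).isCompact_convexHull ℝ
  have hKm : MeasurableSet K := hKc.isClosed.measurableSet
  have hQcont : Continuous (Qmap α β) := by rw [qmap_eq]; exact (QmapCLM α β).continuous
  have hImM : MeasurableSet (Qmap α β '' K) :=
    (hKc.image hQcont).isClosed.measurableSet
  have hinj : Set.InjOn (Qmap α β) K := by
    intro x _ y _ hxy
    rw [qmap_eq] at hxy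
    have h1 := qinv_qmap α β hβ' x
    have h2 := qinv_qmap α β hβ' y
    rw [← h1, ← h2, hxy]
  have him : Qmap α β '' K ⊆ Ut := by
    rintro _ ⟨x, hx, rfl⟩
    show QinvCLM α β (Qmap α β x) ∈ U
    rw [qmap_eq, qinv_qmap α β hβ']
    exact hKU hx
  -- rewrite the transported energy via change of variables
  have hcong : ∫ q in Qmap α β '' K,
      ((pdx (pdx (u ∘ Qinv α β)) q) ^ 2 + (pdy (pdx (u ∘ Qinv α β)) q) ^ 2
        + (pdx (pdy (u ∘ Qinv α β)) q) ^ 2 + (pdy (pdy (u ∘ Qinv α β)) q) ^ 2)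
      = ∫ q in Qmap α β '' K, (W ∘ ⇑(QinvCLM α β)) q := by
    refine setIntegral_congr_fun hImM (fun q hq => ?_)
    obtain ⟨hc1, hc2, hc3, hc4⟩ := hsec q (him hq)
    simp only [Function.comp_apply, hWd]
    rw [hc1, hc2, hc3, hc4]
  have hcov : ∫ q in Qmap α β '' K, (W ∘ ⇑(QinvCLM α β)) q = ∫ x in K, β * W x := by
    rw [qmap_eq]
    rw [integral_image_eq_integral_abs_det_fderiv_smul volume hKm
      (fun x _ => (QmapCLM α β).hasFDerivAt.hasFDerivWithinAt)
      (by rw [← qmap_eq]; exact hinj) (W ∘ ⇑(QinvCLM α β))]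
    refine setIntegral_congr_fun hKm (fun x _ => ?_)
    simp only [Function.comp_apply, qmap_det, qinv_qmap α β hβ', smul_eq_mul,
      abs_of_pos hβ]
  have himg : h2sq (u ∘ Qinv α β) (Qmap α β '' K) = ∫ x in K, β * W x := by
    rw [h2sq, hcong, hcov]
  have hu2 : h2sq u K = ∫ x in K, (ax x ^ 2 + bx x ^ 2 + cx x ^ 2 + dx x ^ 2) := rfl
  -- continuity of the second derivatives
  have hpx_cd : ContDiffOn ℝ 1 px U :=
    (ContinuousLinearMap.apply ℝ ℝ ((1:ℝ), (0:ℝ))).contDiff.comp_contDiffOn hfd1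
  have hpy_cd : ContDiffOn ℝ 1 py U :=
    (ContinuousLinearMap.apply ℝ ℝ ((0:ℝ), (1:ℝ))).contDiff.comp_contDiffOn hfd1
  have hfpx : ContinuousOn (fderiv ℝ px) U := hpx_cd.continuousOn_fderiv_of_isOpen hUo (le_refl 1)
  have hfpy : ContinuousOn (fderiv ℝ py) U := hpy_cd.continuousOn_fderiv_of_isOpen hUo (le_refl 1)
  have haxc : ContinuousOn ax U :=
    (ContinuousLinearMap.apply ℝ ℝ ((1:ℝ), (0:ℝ))).continuous.comp_continuousOn hfpx
  have hbxc : ContinuousOn bx U :=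
    (ContinuousLinearMap.apply ℝ ℝ ((0:ℝ), (1:ℝ))).continuous.comp_continuousOn hfpx
  have hcxc : ContinuousOn cx U :=
    (ContinuousLinearMap.apply ℝ ℝ ((1:ℝ), (0:ℝ))).continuous.comp_continuousOn hfpy
  have hdxc : ContinuousOn dx U :=
    (ContinuousLinearMap.apply ℝ ℝ ((0:ℝ), (1:ℝ))).continuous.comp_continuousOn hfpy
  have hIc : ContinuousOn (fun x => ax x ^ 2 + bx x ^ 2 + cx x ^ 2 + dx x ^ 2) K :=
    (((((haxc.pow 2).add (hbxc.pow 2)).add (hcxc.pow 2)).add (hdxc.pow 2))).mono hKU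
  have hWc : ContinuousOn W K := by
    rw [hWd]
    exact ((((haxc.pow 2)).add
      (((continuousOn_const.mul haxc).add (continuousOn_const.mul hbxc)).pow 2)).add
      (((continuousOn_const.mul haxc).add (continuousOn_const.mul hcxc)).pow 2)).add
      ((((continuousOn_const.mul ((continuousOn_const.mul haxc).add
        (continuousOn_const.mul hbxc))).add
        ((continuousOn_const.mul ((continuousOn_const.mul hcxc).add
        (continuousOn_const.mul hdxc)))))).pow 2)
      |>.mono hKU
  have hIint : IntegrableOn (fun x => ax x ^ 2 + bx x ^ 2 + cx x ^ 2 + dx x ^ 2) K volume :=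
    hIc.integrableOn_compact hKc
  have hWint : IntegrableOn (fun x => β * W x) K volume :=
    (continuousOn_const.mul hWc).integrableOn_compact hKc
  -- pointwise bounds
  have hpoint : ∀ x ∈ K,
      ((α ^ 2 + β ^ 2 + 1 - s) ^ 2 / 4) * (β * W x)
        ≤ β * (ax x ^ 2 + bx x ^ 2 + cx x ^ 2 + dx x ^ 2) ∧
      β * (ax x ^ 2 + bx x ^ 2 + cx x ^ 2 + dx x ^ 2)
        ≤ ((α ^ 2 + β ^ 2 + 1 + s) ^ 2 / 4) * (β * W x) := by
    intro x _
    obtain ⟨l, r⟩ := alg_key α β s (ax x) (-(α / β) * ax x + β⁻¹ * bx x)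
      (-(α / β) * ax x + β⁻¹ * cx x)
      (-(α / β) * (-(α / β) * ax x + β⁻¹ * bx x) + β⁻¹ * (-(α / β) * cx x + β⁻¹ * dx x))
      hβ hs2 hs0
    have hPhi : (ax x) ^ 2 + (α * ax x + β * (-(α / β) * ax x + β⁻¹ * bx x)) ^ 2
        + (α * ax x + β * (-(α / β) * ax x + β⁻¹ * cx x)) ^ 2
        + (α ^ 2 * ax x + α * β * (-(α / β) * ax x + β⁻¹ * bx x)
          + α * β * (-(α / β) * ax x + β⁻¹ * cx x)
          + β ^ 2 * (-(α / β) * (-(α / β) * ax x + β⁻¹ * bx x)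
            + β⁻¹ * (-(α / β) * cx x + β⁻¹ * dx x))) ^ 2
        = ax x ^ 2 + bx x ^ 2 + cx x ^ 2 + dx x ^ 2 := by
      field_simp
      ring
    rw [hPhi] at l r
    have hWx : W x = (ax x) ^ 2 + (-(α / β) * ax x + β⁻¹ * bx x) ^ 2
        + (-(α / β) * ax x + β⁻¹ * cx x) ^ 2
        + (-(α / β) * (-(α / β) * ax x + β⁻¹ * bx x)
          + β⁻¹ * (-(α / β) * cx x + β⁻¹ * dx x)) ^ 2 := by simp only [hWd]
    have l' := mul_le_mul_of_nonneg_left l hβ.le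
    have r' := mul_le_mul_of_nonneg_left r hβ.le
    constructor
    · rw [hWx]; linarith [l']
    · rw [hWx]; linarith [r']
  -- conclusion
  constructor
  · rw [himg, hu2, ← MeasureTheory.integral_const_mul, ← MeasureTheory.integral_const_mul]
    exact setIntegral_mono_on (hWint.const_mul _) (hIint.const_mul β) hKm
      (fun x hx => (hpoint x hx).1)
  · rw [himg, hu2, ← MeasureTheory.integral_const_mul, ← MeasureTheory.integral_const_mul]
    exact setIntegral_mono_on (hIint.const_mul β) (hWint.const_mul _) hKm
      (fun x hx => (hpoint x hx).2)
end
end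

section
/- Let α ∈ ℝ, β > 0, γ = α² + β² + 1, and δ = √(γ² − 4β²) (note γ² − 4β² ≥ 0). Let Q be the 2×2 matrix [[1, α], [0, β]] and let T be the 4×4 matrix [[1,0,0,0],[α,β,0,0],[α,0,β,0],[α²,αβ,αβ,β²]]. Then the eigenvalues of QᵗQ are (γ − δ)/2 and (γ + δ)/2, and the characteristic polynomial of TᵗT is (x − β²)²·(x − ((γ − δ)/2)²)·(x − ((γ + δ)/2)²); in particular the minimum and maximum eigenvalues of TᵗT are the squares of the minimum and maximum eigenvalues of QᵗQ, and β² is an eigenvalue of TᵗT of algebraic multiplicity 2. -/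
open MeasureTheory Real

noncomputable section

set_option maxHeartbeats 2000000 in
open Polynomial Matrix in
/-- eigenvalues of `QᵀQ` are `(γ ∓ δ)/2`, the characteristic polynomial of
`TᵀT` is `(x − β²)² (x − ((γ−δ)/2)²) (x − ((γ+δ)/2)²)`; in particular the minimum and
maximum eigenvalues of `TᵀT` are the squares of those of `QᵀQ` and `β²` is an eigenvalue
of algebraic multiplicity 2. -/
theorem stmt_9 (α β : ℝ) (hβ : 0 < β)
    (γ δ : ℝ) (hγ : γ = α ^ 2 + β ^ 2 + 1) (hδ : δ = Real.sqrt (γ ^ 2 - 4 * β ^ 2))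
    (Q : Matrix (Fin 2) (Fin 2) ℝ) (hQ : Q = !![1, α; 0, β])
    (T : Matrix (Fin 4) (Fin 4) ℝ)
    (hT : T = !![1, 0, 0, 0; α, β, 0, 0; α, 0, β, 0; α ^ 2, α * β, α * β, β ^ 2]) :
    (Qᵀ * Q).charpoly = (X - C ((γ - δ) / 2)) * (X - C ((γ + δ) / 2)) ∧
    (Tᵀ * T).charpoly =
      (X - C (β ^ 2)) ^ 2 * (X - C (((γ - δ) / 2) ^ 2)) * (X - C (((γ + δ) / 2) ^ 2)) ∧
    ((γ - δ) / 2) ^ 2 ≤ β ^ 2 ∧ β ^ 2 ≤ ((γ + δ) / 2) ^ 2 := by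
  have hnn : 0 ≤ γ ^ 2 - 4 * β ^ 2 := by
    have : γ ^ 2 - 4 * β ^ 2 = (α ^ 2 + (β - 1) ^ 2) * (α ^ 2 + (β + 1) ^ 2) := by
      rw [hγ]; ring
    rw [this]; positivity
  have hδ2 : δ ^ 2 = γ ^ 2 - 4 * β ^ 2 := by rw [hδ, Real.sq_sqrt hnn]
  have hδnn : 0 ≤ δ := hδ ▸ Real.sqrt_nonneg _
  have hγnn : 0 ≤ γ := by rw [hγ]; positivity
  have hγδ : δ ≤ γ := by nlinarith [sq_nonneg β]
  have hsum : (γ - δ) / 2 + (γ + δ) / 2 = γ := by ring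
  have hprod : (γ - δ) / 2 * ((γ + δ) / 2) = β ^ 2 := by linarith [hδ2]
  have h1 : ((γ - δ) / 2) ^ 2 + ((γ + δ) / 2) ^ 2 = γ ^ 2 - 2 * β ^ 2 := by
    nlinarith [hδ2]
  have e2 : ∀ a b : ℝ, (X - C a) * (X - C b) = X ^ 2 - C (a + b) * X + C (a * b) := by
    intro a b; rw [C_add, C_mul]; ring
  refine ⟨?_, ?_, ?_, ?_⟩
  · -- 2×2 charpoly
    have ht : Qᵀ = !![1, 0; α, β] := by
      rw [hQ]; ext i j; fin_cases i <;> fin_cases j <;> rfl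
    rw [e2, hsum, hprod, ht, hQ, Matrix.charpoly, Matrix.det_fin_two, hγ]
    simp [charmatrix_apply, Matrix.mul_apply, Fin.sum_univ_two, C_add, C_pow, C_1]
    ring
  · -- 4×4 charpoly
    have ht : Tᵀ = !![1, α, α, α ^ 2; 0, β, 0, α * β; 0, 0, β, α * β; 0, 0, 0, β ^ 2] := by
      rw [hT]; ext i j; fin_cases i <;> fin_cases j <;> rfl
    have hM : Tᵀ * T
        = !![1 + 2 * α ^ 2 + α ^ 4, α * β + α ^ 3 * β, α * β + α ^ 3 * β, α ^ 2 * β ^ 2;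
             α * β + α ^ 3 * β, β ^ 2 + α ^ 2 * β ^ 2, α ^ 2 * β ^ 2, α * β ^ 3;
             α * β + α ^ 3 * β, α ^ 2 * β ^ 2, β ^ 2 + α ^ 2 * β ^ 2, α * β ^ 3;
             α ^ 2 * β ^ 2, α * β ^ 3, α * β ^ 3, β ^ 4] := by
      rw [ht, hT]; ext i j; fin_cases i <;> fin_cases j <;>
        simp [Matrix.mul_apply, Fin.sum_univ_four] <;> ring
    have hrhs : (X - C (β ^ 2)) ^ 2 * (X - C (((γ - δ) / 2) ^ 2)) * (X - C (((γ + δ) / 2) ^ 2))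
        = (X - C (β ^ 2)) ^ 2 * (X ^ 2 - C (γ ^ 2 - 2 * β ^ 2) * X + C ((β ^ 2) ^ 2)) := by
      have h2 : ((γ - δ) / 2) ^ 2 * ((γ + δ) / 2) ^ 2 = (β ^ 2) ^ 2 := by
        rw [← mul_pow, hprod]
      rw [mul_assoc, e2, h1, h2]
    rw [hrhs]
    have hcm : (Tᵀ * T).charmatrix
        = !![X - C (1 + 2 * α ^ 2 + α ^ 4), -C (α * β + α ^ 3 * β), -C (α * β + α ^ 3 * β),
               -C (α ^ 2 * β ^ 2);
             -C (α * β + α ^ 3 * β), X - C (β ^ 2 + α ^ 2 * β ^ 2), -C (α ^ 2 * β ^ 2),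
               -C (α * β ^ 3);
             -C (α * β + α ^ 3 * β), -C (α ^ 2 * β ^ 2), X - C (β ^ 2 + α ^ 2 * β ^ 2),
               -C (α * β ^ 3);
             -C (α ^ 2 * β ^ 2), -C (α * β ^ 3), -C (α * β ^ 3), X - C (β ^ 4)] := by
      rw [hM]; ext i j; fin_cases i <;> fin_cases j <;>
        simp [charmatrix_apply_eq, charmatrix_apply_ne]
    rw [Matrix.charpoly, hcm, hγ]
    simp [Matrix.det_succ_row_zero, Fin.sum_univ_succ, Fin.succAbove, show (Fin.castSucc 2 : Fin 4) = 2 from rfl]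
    simp only [map_add, _root_.map_mul, map_pow, map_sub, _root_.map_one, map_ofNat, C_1]
    ring
  · nlinarith [hδ2, mul_nonneg hδnn (sub_nonneg.2 hγδ)]
  · nlinarith [hδ2, mul_nonneg hδnn (by linarith : (0:ℝ) ≤ γ + δ)]
end
end

section
/- (Lemma 3) Let K ⊂ ℝ² be a nondegenerate triangle, ε > −1, let Q be the linear map (x,y) ↦ (x, (1+ε)y), and K̃ = Q(K). For any u : ℝ² → ℝ twice continuously differentiable on an open neighborhood of the closed triangle K, with ũ = u ∘ Q⁻¹: if ε > 0, then (1+ε)⁻¹·‖∇ũ‖²_{K̃} ≤ ‖∇u‖²_K ≤ (1+ε)·‖∇ũ‖²_{K̃} and (1+ε)⁻¹·‖D²ũ‖²_{K̃} ≤ ‖D²u‖²_K ≤ (1+ε)³·‖D²ũ‖²_{K̃}; if −1 < ε < 0, then (1+ε)·‖∇ũ‖²_{K̃} ≤ ‖∇u‖²_K ≤ (1+ε)⁻¹·‖∇ũ‖²_{K̃} and (1+ε)³·‖D²ũ‖²_{K̃} ≤ ‖D²u‖²_K ≤ (1+ε)⁻¹·‖D²ũ‖²_{K̃}. -/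
open MeasureTheory Real

noncomputable section

def scaleMap (β : ℝ) : Pt →L[ℝ] Pt :=
  (ContinuousLinearMap.fst ℝ ℝ ℝ).prod (β • ContinuousLinearMap.snd ℝ ℝ ℝ)

lemma scaleMap_apply (β : ℝ) (p : Pt) : scaleMap β p = (p.1, β * p.2) := rfl

def scaleEquiv (β : ℝ) (hβ : β ≠ 0) : Pt ≃L[ℝ] Pt :=
  ContinuousLinearEquiv.equivOfInverse (scaleMap β) (scaleMap β⁻¹)
    (fun p => by simp [scaleMap_apply]; field_simp)
    (fun p => by simp [scaleMap_apply]; field_simp)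

lemma scaleMap_det (β : ℝ) : (scaleMap β).det = β := by
  have : LinearMap.toMatrix (Module.Basis.finTwoProd ℝ) (Module.Basis.finTwoProd ℝ)
      (scaleMap β).toLinearMap = !![1, 0; 0, β] := by
    ext i j
    fin_cases i <;> fin_cases j <;>
      simp [LinearMap.toMatrix_apply, scaleMap, Module.Basis.finTwoProd]
  have h2 := LinearMap.det_toMatrix (Module.Basis.finTwoProd ℝ) (scaleMap β).toLinearMap
  rw [this] at h2
  rw [ContinuousLinearMap.det, ← h2]  -- maybe
  simp [Matrix.det_fin_two]

lemma cov (β : ℝ) (hβ : 0 < β) (K : Set Pt) (hK : MeasurableSet K) (g : Pt → ℝ) :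
    ∫ p in (scaleMap β) '' K, g p = β * ∫ p in K, g (scaleMap β p) := by
  have h := integral_image_eq_integral_abs_det_fderiv_smul volume hK
    (f' := fun _ => scaleMap β)
    (fun x _ => ((scaleMap β).hasFDerivAt).hasFDerivWithinAt)
    ((scaleEquiv β hβ.ne').injective.injOn) g
  rw [h]
  simp only [scaleMap_det, abs_of_pos hβ, smul_eq_mul]
  rw [MeasureTheory.integral_const_mul]

lemma scaleEquiv_symm_apply (β : ℝ) (hβ : β ≠ 0) (p : Pt) :
    (scaleEquiv β hβ).symm p = (p.1, β⁻¹ * p.2) := by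
  rw [scaleEquiv, ContinuousLinearEquiv.symm_equivOfInverse,
    ContinuousLinearEquiv.equivOfInverse_apply]
  rfl

lemma scaleEquiv_apply (β : ℝ) (hβ : β ≠ 0) (p : Pt) :
    scaleEquiv β hβ p = (p.1, β * p.2) := rfl

lemma fderiv_comp_symm (u : Pt → ℝ) (β : ℝ) (hβ : β ≠ 0) (p v : Pt) :
    fderiv ℝ (u ∘ ⇑(scaleEquiv β hβ).symm) p v
      = fderiv ℝ u ((scaleEquiv β hβ).symm p) ((scaleEquiv β hβ).symm v) := by
  rw [ContinuousLinearEquiv.comp_right_fderiv]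
  rfl

lemma pdx_comp (u : Pt → ℝ) (β : ℝ) (hβ : β ≠ 0) :
    pdx (u ∘ ⇑(scaleEquiv β hβ).symm) = (pdx u) ∘ ⇑(scaleEquiv β hβ).symm := by
  funext p
  show fderiv ℝ (u ∘ ⇑(scaleEquiv β hβ).symm) p (1,0) = _
  rw [fderiv_comp_symm u β hβ p (1,0), scaleEquiv_symm_apply β hβ (1,0)]
  simp [pdx]

lemma pdy_comp (u : Pt → ℝ) (β : ℝ) (hβ : β ≠ 0) :
    pdy (u ∘ ⇑(scaleEquiv β hβ).symm) = (fun q => β⁻¹ * pdy u q) ∘ ⇑(scaleEquiv β hβ).symm := by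
  funext p
  show fderiv ℝ (u ∘ ⇑(scaleEquiv β hβ).symm) p (0,1) = _
  rw [fderiv_comp_symm, scaleEquiv_symm_apply β hβ (0,1)]
  have : ((0:ℝ), β⁻¹ * 1) = β⁻¹ • ((0:ℝ),(1:ℝ)) := by simp [Prod.smul_def]
  rw [this, _root_.map_smul]
  simp [pdy]

def rIso (c : ℝ) (hc : c ≠ 0) : ℝ ≃L[ℝ] ℝ :=
  ContinuousLinearEquiv.equivOfInverse (c • ContinuousLinearMap.id ℝ ℝ)
    (c⁻¹ • ContinuousLinearMap.id ℝ ℝ) (fun x => by simp; field_simp)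
    (fun x => by simp; field_simp)

lemma fderiv_const_mul' (c : ℝ) (hc : c ≠ 0) (g : Pt → ℝ) (p v : Pt) :
    fderiv ℝ (fun q => c * g q) p v = c * fderiv ℝ g p v := by
  have h1 : (fun q => c * g q) = ⇑(rIso c hc) ∘ g := by
    funext q; simp [rIso, ContinuousLinearEquiv.equivOfInverse_apply]
  rw [h1, ContinuousLinearEquiv.comp_fderiv]
  simp [rIso, ContinuousLinearEquiv.equivOfInverse_apply]

lemma pdx_const_mul (c : ℝ) (hc : c ≠ 0) (g : Pt → ℝ) :
    pdx (fun q => c * g q) = fun p => c * pdx g p := by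
  funext p; exact fderiv_const_mul' c hc g p (1,0)

lemma pdy_const_mul (c : ℝ) (hc : c ≠ 0) (g : Pt → ℝ) :
    pdy (fun q => c * g q) = fun p => c * pdy g p := by
  funext p; exact fderiv_const_mul' c hc g p (0,1)

lemma symm_scale_scale (β : ℝ) (hβ : β ≠ 0) (q : Pt) :
    (scaleEquiv β hβ).symm (scaleMap β q) = q := (scaleEquiv β hβ).symm_apply_apply q

lemma integrable_sq_fderiv (u : Pt → ℝ) {U : Set Pt} (hUo : IsOpen U)
    (hC : ContDiffOn ℝ 1 u U) {K : Set Pt} (hKc : IsCompact K) (hKU : K ⊆ U) (v : Pt) :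
    IntegrableOn (fun p => (fderiv ℝ u p v) ^ 2) K := by
  have hfd : ContinuousOn (fderiv ℝ u) U := hC.continuousOn_fderiv_of_isOpen hUo le_rfl
  have h1 : ContinuousOn (fun p => fderiv ℝ u p v) U :=
    (ContinuousLinearMap.apply ℝ ℝ v).continuous.comp_continuousOn hfd
  have h2 : ContinuousOn (fun p => (fderiv ℝ u p v) ^ 2) U := h1.pow 2
  exact (h2.mono hKU).integrableOn_compact hKc

lemma contDiffOn_pd (u : Pt → ℝ) {U : Set Pt} (hUo : IsOpen U)
    (hC : ContDiffOn ℝ 2 u U) (v : Pt) :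
    ContDiffOn ℝ 1 (fun p => fderiv ℝ u p v) U := by
  have h1 : ContDiffOn ℝ 1 (fderiv ℝ u) U := hC.fderiv_of_isOpen hUo le_rfl
  exact (ContinuousLinearMap.apply ℝ ℝ v).contDiff.comp_contDiffOn h1

set_option maxHeartbeats 2000000 in
/-- Lemma 3: the case `α = 0`, `β = 1 + ε` of Lemma 2, for `ε > 0` and
`−1 < ε < 0`. -/
theorem stmt_10 (O A B : Pt) (hK : Nondeg O A B) (ε : ℝ) (hε : -1 < ε)
    (u : Pt → ℝ) (hu : Smooth2 u (Tri O A B)) :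
    (0 < ε →
      (1 + ε)⁻¹ * h1sq (u ∘ Qinv 0 (1 + ε)) (Qmap 0 (1 + ε) '' Tri O A B) ≤
          h1sq u (Tri O A B) ∧
      h1sq u (Tri O A B) ≤
          (1 + ε) * h1sq (u ∘ Qinv 0 (1 + ε)) (Qmap 0 (1 + ε) '' Tri O A B) ∧
      (1 + ε)⁻¹ * h2sq (u ∘ Qinv 0 (1 + ε)) (Qmap 0 (1 + ε) '' Tri O A B) ≤
          h2sq u (Tri O A B) ∧
      h2sq u (Tri O A B) ≤
          (1 + ε) ^ 3 * h2sq (u ∘ Qinv 0 (1 + ε)) (Qmap 0 (1 + ε) '' Tri O A B)) ∧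
    (ε < 0 →
      (1 + ε) * h1sq (u ∘ Qinv 0 (1 + ε)) (Qmap 0 (1 + ε) '' Tri O A B) ≤
          h1sq u (Tri O A B) ∧
      h1sq u (Tri O A B) ≤
          (1 + ε)⁻¹ * h1sq (u ∘ Qinv 0 (1 + ε)) (Qmap 0 (1 + ε) '' Tri O A B) ∧
      (1 + ε) ^ 3 * h2sq (u ∘ Qinv 0 (1 + ε)) (Qmap 0 (1 + ε) '' Tri O A B) ≤
          h2sq u (Tri O A B) ∧
      h2sq u (Tri O A B) ≤
          (1 + ε)⁻¹ * h2sq (u ∘ Qinv 0 (1 + ε)) (Qmap 0 (1 + ε) '' Tri O A B)) := by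
  set β : ℝ := 1 + ε with hβdef
  have hβ0 : (0 : ℝ) < β := by simp only [hβdef]; linarith
  have hβ : β ≠ 0 := hβ0.ne'
  set K : Set Pt := Tri O A B with hKdef
  have hKc : IsCompact K := (Set.toFinite ({O, A, B} : Set Pt)).isCompact_convexHull ℝ
  have hKm : MeasurableSet K := hKc.measurableSet
  obtain ⟨U, hUo, hKU, hC2⟩ := hu
  have hC1 : ContDiffOn ℝ 1 u U := hC2.of_le (by norm_num)
  -- notation
  have hQi : Qinv 0 β = ⇑(scaleEquiv β hβ).symm := by
    funext p
    rw [scaleEquiv_symm_apply]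
    simp only [Qinv]
    rw [zero_div, zero_mul, sub_zero, div_eq_inv_mul]
  have hQm : Qmap 0 β = ⇑(scaleMap β) := by
    funext p
    simp [Qmap, scaleMap_apply]
  -- first order integrals
  set Sx : ℝ := ∫ p in K, (pdx u p) ^ 2 with hSx
  set Sy : ℝ := ∫ p in K, (pdy u p) ^ 2 with hSy
  have hIx : IntegrableOn (fun p => (pdx u p) ^ 2) K :=
    integrable_sq_fderiv u hUo hC1 hKc hKU (1, 0)
  have hIy : IntegrableOn (fun p => (pdy u p) ^ 2) K :=
    integrable_sq_fderiv u hUo hC1 hKc hKU (0, 1)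
  have key0 : h1sq u K = Sx + Sy := by
    rw [h1sq, MeasureTheory.integral_add hIx hIy]
  have key1 : h1sq (u ∘ Qinv 0 β) (Qmap 0 β '' K) = β * Sx + β⁻¹ * Sy := by
    rw [hQi, hQm, h1sq, cov β hβ0 K hKm]
    simp only [pdx_comp u β hβ, pdy_comp u β hβ, Function.comp_apply, symm_scale_scale]
    rw [show (fun q => (pdx u q) ^ 2 + (β⁻¹ * pdy u q) ^ 2)
        = (fun q => (pdx u q) ^ 2 + β⁻¹ ^ 2 * (pdy u q) ^ 2) from
      funext fun q => by ring]
    rw [MeasureTheory.integral_add hIx ((hIy.const_mul (β⁻¹ ^ 2)))]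
    rw [MeasureTheory.integral_const_mul]
    field_simp
    ring
  -- second order
  have hCx : ContDiffOn ℝ 1 (pdx u) U := contDiffOn_pd u hUo hC2 (1, 0)
  have hCy : ContDiffOn ℝ 1 (pdy u) U := contDiffOn_pd u hUo hC2 (0, 1)
  set Sxx : ℝ := ∫ p in K, (pdx (pdx u) p) ^ 2 with hSxx
  set Syx : ℝ := ∫ p in K, (pdy (pdx u) p) ^ 2 with hSyx
  set Sxy : ℝ := ∫ p in K, (pdx (pdy u) p) ^ 2 with hSxy
  set Syy : ℝ := ∫ p in K, (pdy (pdy u) p) ^ 2 with hSyy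
  have hIxx : IntegrableOn (fun p => (pdx (pdx u) p) ^ 2) K :=
    integrable_sq_fderiv (pdx u) hUo hCx hKc hKU (1, 0)
  have hIyx : IntegrableOn (fun p => (pdy (pdx u) p) ^ 2) K :=
    integrable_sq_fderiv (pdx u) hUo hCx hKc hKU (0, 1)
  have hIxy : IntegrableOn (fun p => (pdx (pdy u) p) ^ 2) K :=
    integrable_sq_fderiv (pdy u) hUo hCy hKc hKU (1, 0)
  have hIyy : IntegrableOn (fun p => (pdy (pdy u) p) ^ 2) K :=
    integrable_sq_fderiv (pdy u) hUo hCy hKc hKU (0, 1)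
  have hS1 : IntegrableOn (fun p => (pdx (pdx u) p) ^ 2 + (pdy (pdx u) p) ^ 2) K :=
    hIxx.add hIyx
  have hS2 : IntegrableOn
      (fun p => (pdx (pdx u) p) ^ 2 + (pdy (pdx u) p) ^ 2 + (pdx (pdy u) p) ^ 2) K :=
    hS1.add hIxy
  have key02 : h2sq u K = Sxx + Syx + Sxy + Syy := by
    rw [h2sq, MeasureTheory.integral_add hS2 hIyy, MeasureTheory.integral_add hS1 hIxy,
      MeasureTheory.integral_add hIxx hIyx]
  have hβi : β⁻¹ ≠ 0 := inv_ne_zero hβ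
  have key2 : h2sq (u ∘ Qinv 0 β) (Qmap 0 β '' K)
      = β * Sxx + β⁻¹ * Syx + β⁻¹ * Sxy + β⁻¹ ^ 3 * Syy := by
    rw [hQi, hQm, h2sq, cov β hβ0 K hKm]
    have e1 : pdx (u ∘ ⇑(scaleEquiv β hβ).symm) = (pdx u) ∘ ⇑(scaleEquiv β hβ).symm :=
      pdx_comp u β hβ
    have e2 : pdy (u ∘ ⇑(scaleEquiv β hβ).symm)
        = (fun q => β⁻¹ * pdy u q) ∘ ⇑(scaleEquiv β hβ).symm := pdy_comp u β hβ
    have e3 : pdx (pdx (u ∘ ⇑(scaleEquiv β hβ).symm))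
        = (pdx (pdx u)) ∘ ⇑(scaleEquiv β hβ).symm := by
      rw [e1]; exact pdx_comp (pdx u) β hβ
    have e4 : pdy (pdx (u ∘ ⇑(scaleEquiv β hβ).symm))
        = (fun q => β⁻¹ * pdy (pdx u) q) ∘ ⇑(scaleEquiv β hβ).symm := by
      rw [e1]; exact pdy_comp (pdx u) β hβ
    have e5 : pdx (pdy (u ∘ ⇑(scaleEquiv β hβ).symm))
        = (fun q => β⁻¹ * pdx (pdy u) q) ∘ ⇑(scaleEquiv β hβ).symm := by
      rw [e2, pdx_comp (fun q => β⁻¹ * pdy u q) β hβ, pdx_const_mul β⁻¹ hβi (pdy u)]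
    have e6 : pdy (pdy (u ∘ ⇑(scaleEquiv β hβ).symm))
        = (fun q => β⁻¹ * (β⁻¹ * pdy (pdy u) q)) ∘ ⇑(scaleEquiv β hβ).symm := by
      rw [e2, pdy_comp (fun q => β⁻¹ * pdy u q) β hβ, pdy_const_mul β⁻¹ hβi (pdy u)]
    simp only [e3, e4, e5, e6, Function.comp_apply, symm_scale_scale]
    rw [show (fun q => (pdx (pdx u) q) ^ 2 + (β⁻¹ * pdy (pdx u) q) ^ 2
          + (β⁻¹ * pdx (pdy u) q) ^ 2 + (β⁻¹ * (β⁻¹ * pdy (pdy u) q)) ^ 2)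
        = (fun q => ((pdx (pdx u) q) ^ 2 + β⁻¹ ^ 2 * (pdy (pdx u) q) ^ 2
          + β⁻¹ ^ 2 * (pdx (pdy u) q) ^ 2) + β⁻¹ ^ 4 * (pdy (pdy u) q) ^ 2) from
      funext fun q => by ring]
    have hT1 : IntegrableOn
        (fun q => (pdx (pdx u) q) ^ 2 + β⁻¹ ^ 2 * (pdy (pdx u) q) ^ 2) K :=
      hIxx.add (hIyx.const_mul _)
    have hT2 : IntegrableOn (fun q => (pdx (pdx u) q) ^ 2 + β⁻¹ ^ 2 * (pdy (pdx u) q) ^ 2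
        + β⁻¹ ^ 2 * (pdx (pdy u) q) ^ 2) K := hT1.add (hIxy.const_mul _)
    rw [MeasureTheory.integral_add hT2 (hIyy.const_mul _),
      MeasureTheory.integral_add hT1 (hIxy.const_mul _),
      MeasureTheory.integral_add hIxx (hIyx.const_mul _),
      MeasureTheory.integral_const_mul, MeasureTheory.integral_const_mul,
      MeasureTheory.integral_const_mul]
    field_simp
    ring
  -- nonnegativity
  have hSxn : 0 ≤ Sx := setIntegral_nonneg hKm fun _ _ => sq_nonneg _
  have hSyn : 0 ≤ Sy := setIntegral_nonneg hKm fun _ _ => sq_nonneg _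
  have hSxxn : 0 ≤ Sxx := setIntegral_nonneg hKm fun _ _ => sq_nonneg _
  have hSyxn : 0 ≤ Syx := setIntegral_nonneg hKm fun _ _ => sq_nonneg _
  have hSxyn : 0 ≤ Sxy := setIntegral_nonneg hKm fun _ _ => sq_nonneg _
  have hSyyn : 0 ≤ Syy := setIntegral_nonneg hKm fun _ _ => sq_nonneg _
  have hi0 : 0 < β⁻¹ := inv_pos.2 hβ0
  have hmul : β * β⁻¹ = 1 := mul_inv_cancel₀ hβ
  refine ⟨fun hε0 => ?_, fun hε0 => ?_⟩
  · have hβ1 : 1 < β := by simp only [hβdef]; linarith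
    have ha1 : β⁻¹ < 1 := by nlinarith [hmul, hi0]
    have h2 : β⁻¹ ^ 2 ≤ 1 := by nlinarith [hi0]
    have h4 : β⁻¹ ^ 4 ≤ 1 := by nlinarith [h2, hi0, sq_nonneg β⁻¹]
    have hb2 : 1 ≤ β ^ 2 := by nlinarith
    have hb4 : 1 ≤ β ^ 4 := by nlinarith [hb2]
    refine ⟨?_, ?_, ?_, ?_⟩
    · simp only [key0, key1]
      have hid : β⁻¹ * (β * Sx + β⁻¹ * Sy) = Sx + β⁻¹ ^ 2 * Sy := by field_simp
      rw [hid]; nlinarith [mul_nonneg (sub_nonneg.2 h2) hSyn]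
    · simp only [key0, key1]
      have hid : β * (β * Sx + β⁻¹ * Sy) = β ^ 2 * Sx + Sy := by field_simp
      rw [hid]; nlinarith [mul_nonneg (sub_nonneg.2 hb2) hSxn]
    · simp only [key02, key2]
      have hid : β⁻¹ * (β * Sxx + β⁻¹ * Syx + β⁻¹ * Sxy + β⁻¹ ^ 3 * Syy)
          = Sxx + β⁻¹ ^ 2 * Syx + β⁻¹ ^ 2 * Sxy + β⁻¹ ^ 4 * Syy := by field_simp
      rw [hid]
      nlinarith [mul_nonneg (sub_nonneg.2 h2) hSyxn, mul_nonneg (sub_nonneg.2 h2) hSxyn,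
        mul_nonneg (sub_nonneg.2 h4) hSyyn]
    · simp only [key02, key2]
      have hid : β ^ 3 * (β * Sxx + β⁻¹ * Syx + β⁻¹ * Sxy + β⁻¹ ^ 3 * Syy)
          = β ^ 4 * Sxx + β ^ 2 * Syx + β ^ 2 * Sxy + Syy := by field_simp
      rw [hid]
      nlinarith [mul_nonneg (sub_nonneg.2 hb2) hSyxn, mul_nonneg (sub_nonneg.2 hb2) hSxyn,
        mul_nonneg (sub_nonneg.2 hb4) hSxxn]
  · have hβ1 : β < 1 := by simp only [hβdef]; linarith
    have ha1 : 1 < β⁻¹ := by nlinarith [hmul, hi0]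
    have h2 : 1 ≤ β⁻¹ ^ 2 := by nlinarith [hi0]
    have h4 : 1 ≤ β⁻¹ ^ 4 := by nlinarith [h2]
    have hb2 : β ^ 2 ≤ 1 := by nlinarith [hβ0]
    have hb4 : β ^ 4 ≤ 1 := by nlinarith [hb2, hβ0, sq_nonneg β]
    refine ⟨?_, ?_, ?_, ?_⟩
    · simp only [key0, key1]
      have hid : β * (β * Sx + β⁻¹ * Sy) = β ^ 2 * Sx + Sy := by field_simp
      rw [hid]; nlinarith [mul_nonneg (sub_nonneg.2 hb2) hSxn]
    · simp only [key0, key1]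
      have hid : β⁻¹ * (β * Sx + β⁻¹ * Sy) = Sx + β⁻¹ ^ 2 * Sy := by field_simp
      rw [hid]; nlinarith [mul_nonneg (sub_nonneg.2 h2) hSyn]
    · simp only [key02, key2]
      have hid : β ^ 3 * (β * Sxx + β⁻¹ * Syx + β⁻¹ * Sxy + β⁻¹ ^ 3 * Syy)
          = β ^ 4 * Sxx + β ^ 2 * Syx + β ^ 2 * Sxy + Syy := by field_simp
      rw [hid]
      nlinarith [mul_nonneg (sub_nonneg.2 hb2) hSyxn, mul_nonneg (sub_nonneg.2 hb2) hSxyn,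
        mul_nonneg (sub_nonneg.2 hb4) hSxxn]
    · simp only [key02, key2]
      have hid : β⁻¹ * (β * Sxx + β⁻¹ * Syx + β⁻¹ * Sxy + β⁻¹ ^ 3 * Syy)
          = Sxx + β⁻¹ ^ 2 * Syx + β⁻¹ ^ 2 * Sxy + β⁻¹ ^ 4 * Syy := by field_simp
      rw [hid]
      nlinarith [mul_nonneg (sub_nonneg.2 h2) hSyxn, mul_nonneg (sub_nonneg.2 h2) hSxyn,
        mul_nonneg (sub_nonneg.2 h4) hSyyn]
end
end

section
/- (Theorem 1, abstract eigenvalue lower-bound framework) Let V be a real vector space, M a symmetric positive definite bilinear form on V (an inner product), and N a symmetric positive semidefinite bilinear form on V. Let V_h ⊆ V be a subspace and P_h : V → V_h a linear map satisfying M(u − P_h u, v_h) = 0 for all u ∈ V and all v_h ∈ V_h. Suppose λ_h > 0 satisfies M(v, v) ≥ λ_h·N(v, v) for all v ∈ V_h, and C_h ≥ 0 satisfies N(u − P_h u, u − P_h u) ≤ C_h²·M(u − P_h u, u − P_h u) for all u ∈ V. Then M(u, u) ≥ (λ_h/(1 + λ_h·C_h²))·N(u, u) for all u ∈ V. -/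
open MeasureTheory Real

noncomputable section

lemma key_young (X Y Z t Mp Me : ℝ) (hX : 0 ≤ X) (hY : 0 ≤ Y) (ht : 0 ≤ t)
    (hMp : 0 ≤ Mp) (hMe : 0 ≤ Me) (hZ : Z ^ 2 ≤ X * Y)
    (h1 : X ≤ Mp) (h2 : Y ≤ t * Me) :
    X + 2 * Z + Y ≤ (1 + t) * (Mp + Me) := by
  rcases eq_or_lt_of_le ht with h | h
  · have hY0 : Y = 0 := le_antisymm (h2.trans (by nlinarith)) hY
    have hZ0 : Z = 0 := by nlinarith [sq_nonneg Z]
    nlinarith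
  · have key2 : 2 * t * Z ≤ t ^ 2 * X + Y := by
      nlinarith [mul_le_mul_of_nonneg_left hZ (sq_nonneg t), sq_nonneg (t ^ 2 * X - Y),
        mul_nonneg (sq_nonneg t) hX, hY, mul_pos h h]
    have tgoal : t * (X + 2 * Z + Y) ≤ t * ((1 + t) * (Mp + Me)) := by
      nlinarith [key2, mul_le_mul_of_nonneg_left h1 (mul_self_nonneg t),
        mul_le_mul_of_nonneg_left h2 ht, mul_le_mul_of_nonneg_left h1 ht]
    exact le_of_mul_le_mul_left tgoal h

/-- Theorem 1, abstract eigenvalue lower-bound framework: if `P_h` is the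
`M`-orthogonal projection onto a subspace `V_h`, `M(v,v) ≥ λ_h N(v,v)` on `V_h`, and
`N(u − P_h u, u − P_h u) ≤ C_h² M(u − P_h u, u − P_h u)` on `V`, then
`M(u,u) ≥ (λ_h/(1 + λ_h C_h²)) N(u,u)` on `V`. -/
theorem stmt_12 {V : Type*} [AddCommGroup V] [Module ℝ V]
    (M N : V →ₗ[ℝ] V →ₗ[ℝ] ℝ)
    (hMsymm : ∀ u v : V, M u v = M v u)
    (hMpos : ∀ u : V, u ≠ 0 → 0 < M u u)
    (hNsymm : ∀ u v : V, N u v = N v u)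
    (hNnonneg : ∀ u : V, 0 ≤ N u u)
    (Vh : Submodule ℝ V) (Ph : V →ₗ[ℝ] V)
    (hPmem : ∀ u : V, Ph u ∈ Vh)
    (hPorth : ∀ u : V, ∀ vh ∈ Vh, M (u - Ph u) vh = 0)
    (lamh Ch : ℝ) (hlamh : 0 < lamh) (hCh : 0 ≤ Ch)
    (hdisc : ∀ v ∈ Vh, lamh * N v v ≤ M v v)
    (herr : ∀ u : V, N (u - Ph u) (u - Ph u) ≤ Ch ^ 2 * M (u - Ph u) (u - Ph u)) :
    ∀ u : V, (lamh / (1 + lamh * Ch ^ 2)) * N u u ≤ M u u := by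
  intro u
  set p := Ph u with hp
  set e := u - Ph u with he
  have hnonneg : ∀ w : V, 0 ≤ M w w := by
    intro w
    rcases eq_or_ne w 0 with rfl | hw
    · simp
    · exact (hMpos w hw).le
  have hue : u = e + p := by simp [he, hp]
  have hMep : M e p = 0 := hPorth u p (hPmem u)
  have hMpe : M p e = 0 := by rw [hMsymm]; exact hMep
  have hMsplit : M u u = M e e + M p p := by
    rw [hue]; simp [map_add, hMep, hMpe]
  have hNsplit : N u u = N e e + 2 * N e p + N p p := by
    rw [hue]; simp [map_add, hNsymm p e]; ring
  -- Cauchy–Schwarz for the semidefinite form N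
  have hCS : (N e p) ^ 2 ≤ N e e * N p p := by
    have hq : ∀ x : ℝ, 0 ≤ N p p * (x * x) + 2 * N e p * x + N e e := by
      intro x
      have h0 := hNnonneg (e + x • p)
      simp only [map_add, LinearMap.add_apply, _root_.map_smul, LinearMap.smul_apply,
        smul_eq_mul] at h0
      rw [hNsymm p e] at h0
      nlinarith [h0]
    have := discrim_le_zero hq
    rw [discrim] at this
    nlinarith
  have hdp : lamh * N p p ≤ M p p := hdisc p (hPmem u)
  have hee : N e e ≤ Ch ^ 2 * M e e := herr u
  have hNpp : 0 ≤ N p p := hNnonneg p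
  have hNee : 0 ≤ N e e := hNnonneg e
  have hMee : 0 ≤ M e e := hnonneg e
  have hMpp : 0 ≤ M p p := hnonneg p
  have hmain : lamh * N u u ≤ (1 + lamh * Ch ^ 2) * M u u := by
    rw [hMsplit, hNsplit]
    have hk := key_young (lamh * N p p) (lamh * N e e) (lamh * N e p)
      (lamh * Ch ^ 2) (M p p) (M e e)
      (mul_nonneg hlamh.le hNpp) (mul_nonneg hlamh.le hNee)
      (mul_nonneg hlamh.le (sq_nonneg Ch)) hMpp hMee
      (by nlinarith [hCS, sq_nonneg lamh]) hdp
      (by nlinarith [hee])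
    nlinarith [hk]
  have hpos : 0 < 1 + lamh * Ch ^ 2 := by positivity
  rw [div_mul_eq_mul_div, div_le_iff₀ hpos]
  nlinarith [hmain]
end
end

section
/- (Theorem 2, monotonicity of C₀) Let 0 < b ≤ b̃ and a ∈ ℝ. Let K be the triangle with vertices (0,0), (1,0), (a, b) and K̃ the triangle with vertices (0,0), (1,0), (a, b̃). If C ≥ 0 satisfies ‖ṽ‖_{K̃} ≤ C·‖D²ṽ‖_{K̃} for all ṽ ∈ V_FM(K̃), then ‖v‖_K ≤ C·‖D²v‖_K for all v ∈ V_FM(K); that is, the optimal constant C₀(K) increases monotonically as the y-coordinate of the third vertex B increases. -/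
open MeasureTheory Real

noncomputable section

/-! ### Auxiliary machinery for `stmt_13` -/

open Set MeasureTheory

/-- The vertical stretch `(x, y) ↦ (x, s y)` as a continuous linear map. -/
def SL (s : ℝ) : Pt →L[ℝ] Pt :=
  LinearMap.toContinuousLinearMap
    (Matrix.toLin (Module.Basis.finTwoProd ℝ) (Module.Basis.finTwoProd ℝ) !![1, 0; 0, s])

lemma SL_apply (s : ℝ) (p : Pt) : SL s p = (p.1, s * p.2) := by
  simp [SL, Matrix.toLin_finTwoProd_apply]

lemma SL_det (s : ℝ) : (SL s).det = s := by
  simp [SL, ContinuousLinearMap.det, LinearMap.det_toContinuousLinearMap, LinearMap.det_toLin,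
    Matrix.det_fin_two_of]

lemma SL_inj {s : ℝ} (hs : s ≠ 0) : Function.Injective (SL s) := by
  intro p q h
  rw [SL_apply, SL_apply, Prod.mk.injEq] at h
  exact Prod.ext h.1 (mul_left_cancel₀ hs h.2)

lemma aux_sumsq_pos {p : Pt} (h : p ≠ 0) : 0 < p.1 ^ 2 + p.2 ^ 2 := by
  have h1 : p.1 ^ 2 + p.2 ^ 2 ≠ 0 := by
    intro hc
    have h2 := sq_nonneg p.1
    have h3 := sq_nonneg p.2
    have h4 : p.1 ^ 2 = 0 ∧ p.2 ^ 2 = 0 := by constructor <;> nlinarith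
    exact h (Prod.ext (pow_eq_zero_iff two_ne_zero |>.1 h4.1)
      (pow_eq_zero_iff two_ne_zero |>.1 h4.2))
  have h2 : 0 ≤ p.1 ^ 2 + p.2 ^ 2 := by positivity
  exact lt_of_le_of_ne h2 (Ne.symm h1)

lemma aux_elen_pos {p : Pt} (h : p ≠ 0) : 0 < elen p :=
  Real.sqrt_pos.2 (aux_sumsq_pos h)

/-- Change of variables for the stretch map. -/
lemma aux_cov {s : ℝ} (hs : 0 < s) (g : Pt → ℝ) {S : Set Pt} (hS : MeasurableSet S) :
    ∫ p in (SL s) '' S, g p = s * ∫ p in S, g (SL s p) := by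
  rw [integral_image_eq_integral_abs_det_fderiv_smul volume hS
    (fun x _ => (SL s).hasFDerivAt.hasFDerivWithinAt) ((SL_inj hs.ne').injOn) g]
  simp only [SL_det, abs_of_pos hs, smul_eq_mul]
  exact integral_const_mul s _

/-- The stretch maps the tall reference triangle onto the short one. -/
lemma aux_tri_image {s a b bt : ℝ} (h : s * bt = b) :
    SL s '' Tri ((0,0) : Pt) ((1,0) : Pt) ((a,bt) : Pt)
      = Tri ((0,0) : Pt) ((1,0) : Pt) ((a,b) : Pt) := by
  have h1 : ⇑(SL s) = ⇑((SL s) : Pt →ₗ[ℝ] Pt) := rfl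
  rw [Tri, Tri, h1, LinearMap.image_convexHull]
  congr 1
  rw [Set.image_insert_eq, Set.image_insert_eq, Set.image_singleton]
  have e1 : ((SL s) : Pt →ₗ[ℝ] Pt) ((0,0) : Pt) = ((0,0) : Pt) := by
    show SL s _ = _; rw [SL_apply]; norm_num
  have e2 : ((SL s) : Pt →ₗ[ℝ] Pt) ((1,0) : Pt) = ((1,0) : Pt) := by
    show SL s _ = _; rw [SL_apply]; norm_num
  have e3 : ((SL s) : Pt →ₗ[ℝ] Pt) ((a,bt) : Pt) = ((a,b) : Pt) := by
    show SL s _ = _; rw [SL_apply]; norm_num [h]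
  rw [e1, e2, e3]

lemma aux_fderiv_comp_SL {w : Pt → ℝ} {s : ℝ} {p : Pt}
    (hw : DifferentiableAt ℝ w (SL s p)) :
    fderiv ℝ (fun q => w (SL s q)) p = (fderiv ℝ w (SL s p)).comp (SL s) :=
  (hw.hasFDerivAt.comp p (SL s).hasFDerivAt).fderiv

lemma aux_pdx_comp {w : Pt → ℝ} {s : ℝ} {p : Pt}
    (hw : DifferentiableAt ℝ w (SL s p)) :
    pdx (fun q => w (SL s q)) p = pdx w (SL s p) := by
  show fderiv ℝ (fun q => w (SL s q)) p ((1,0) : Pt) = fderiv ℝ w (SL s p) ((1,0) : Pt)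
  rw [aux_fderiv_comp_SL hw, ContinuousLinearMap.comp_apply]
  congr 1
  rw [SL_apply]
  norm_num

lemma aux_pdy_comp {w : Pt → ℝ} {s : ℝ} {p : Pt}
    (hw : DifferentiableAt ℝ w (SL s p)) :
    pdy (fun q => w (SL s q)) p = s * pdy w (SL s p) := by
  show fderiv ℝ (fun q => w (SL s q)) p ((0,1) : Pt) = s * fderiv ℝ w (SL s p) ((0,1) : Pt)
  rw [aux_fderiv_comp_SL hw, ContinuousLinearMap.comp_apply]
  have h1 : (SL s) ((0,1) : Pt) = s • ((0,1) : Pt) := by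
    rw [SL_apply]; simp [Prod.ext_iff]
  rw [h1, (fderiv ℝ w (SL s p)).map_smul, smul_eq_mul]

lemma aux_contDiffOn_pdx {v : Pt → ℝ} {U : Set Pt} (hUo : IsOpen U)
    (h : ContDiffOn ℝ 2 v U) : ContDiffOn ℝ 1 (pdx v) U := by
  have h1 : ContDiffOn ℝ 1 (fderiv ℝ v) U := h.fderiv_of_isOpen hUo (by norm_num)
  exact (ContinuousLinearMap.apply ℝ ℝ ((1,0) : Pt)).contDiff.comp_contDiffOn h1

lemma aux_contDiffOn_pdy {v : Pt → ℝ} {U : Set Pt} (hUo : IsOpen U)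
    (h : ContDiffOn ℝ 2 v U) : ContDiffOn ℝ 1 (pdy v) U := by
  have h1 : ContDiffOn ℝ 1 (fderiv ℝ v) U := h.fderiv_of_isOpen hUo (by norm_num)
  exact (ContinuousLinearMap.apply ℝ ℝ ((0,1) : Pt)).contDiff.comp_contDiffOn h1

lemma aux_continuousOn_pdx {v : Pt → ℝ} {U : Set Pt} (hUo : IsOpen U)
    (h : ContDiffOn ℝ 1 v U) : ContinuousOn (pdx v) U := by
  have h1 : ContinuousOn (fderiv ℝ v) U := h.continuousOn_fderiv_of_isOpen hUo le_rfl
  exact (ContinuousLinearMap.apply ℝ ℝ ((1,0) : Pt)).continuous.comp_continuousOn h1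

lemma aux_continuousOn_pdy {v : Pt → ℝ} {U : Set Pt} (hUo : IsOpen U)
    (h : ContDiffOn ℝ 1 v U) : ContinuousOn (pdy v) U := by
  have h1 : ContinuousOn (fderiv ℝ v) U := h.continuousOn_fderiv_of_isOpen hUo le_rfl
  exact (ContinuousLinearMap.apply ℝ ℝ ((0,1) : Pt)).continuous.comp_continuousOn h1

lemma aux_seg_mem {O A B P Q : Pt} (hP : P ∈ Tri O A B) (hQ : Q ∈ Tri O A B) :
    ∀ t : ℝ, t ∈ Set.uIcc (0:ℝ) 1 → P + t • (Q - P) ∈ Tri O A B := by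
  intro t ht
  rw [Set.uIcc_of_le zero_le_one] at ht
  have hseg : segment ℝ P Q ⊆ Tri O A B := (convex_convexHull ℝ _).segment_subset hP hQ
  apply hseg
  rw [segment_eq_image']
  exact ⟨t, ht, rfl⟩

/-- Key lemma: on an edge of the triangle, the mean of `∇v` applied to ANY fixed vector
vanishes, as a consequence of vanishing endpoint values and vanishing mean normal
derivative. -/
lemma aux_edge_grad_int_zero {v : Pt → ℝ} {U : Set Pt} (hUo : IsOpen U)
    (hv : ContDiffOn ℝ 2 v U) {P Q R : Pt} (hPQ : Q - P ≠ 0)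
    (hseg : ∀ t : ℝ, t ∈ Set.uIcc (0:ℝ) 1 → P + t • (Q - P) ∈ U)
    (hvP : v P = 0) (hvQ : v Q = 0)
    (hn : edgeInt (normalDeriv v P Q R) P Q = 0) (w : Pt) :
    ∫ t in (0:ℝ)..1, fderiv ℝ v (P + t • (Q - P)) w = 0 := by
  have hdiff : ∀ t ∈ Set.uIcc (0:ℝ) 1, DifferentiableAt ℝ v (P + t • (Q - P)) := fun t ht =>
    (hv.differentiableOn two_ne_zero).differentiableAt (hUo.mem_nhds (hseg t ht))
  have hpath : Continuous fun t : ℝ => P + t • (Q - P) := by fun_prop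
  have hcont : ∀ w' : Pt,
      ContinuousOn (fun t => fderiv ℝ v (P + t • (Q - P)) w') (Set.uIcc (0:ℝ) 1) := by
    intro w'
    have h1 : ContinuousOn (fderiv ℝ v) U := hv.continuousOn_fderiv_of_isOpen hUo one_le_two
    have h2 : ContinuousOn (fun t : ℝ => fderiv ℝ v (P + t • (Q - P))) (Set.uIcc (0:ℝ) 1) :=
      h1.comp hpath.continuousOn hseg
    exact (ContinuousLinearMap.apply ℝ ℝ w').continuous.comp_continuousOn h2
  have hii : ∀ w' : Pt, IntervalIntegrable
      (fun t => fderiv ℝ v (P + t • (Q - P)) w') volume 0 1 :=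
    fun w' => (hcont w').intervalIntegrable
  -- tangential direction
  have hT : ∫ t in (0:ℝ)..1, fderiv ℝ v (P + t • (Q - P)) (Q - P) = 0 := by
    have hd : ∀ t ∈ Set.uIcc (0:ℝ) 1,
        HasDerivAt (fun t : ℝ => v (P + t • (Q - P)))
          (fderiv ℝ v (P + t • (Q - P)) (Q - P)) t := by
      intro t ht
      have h1 : HasDerivAt (fun t : ℝ => P + t • (Q - P)) (Q - P) t := by
        simpa using ((hasDerivAt_id t).smul_const (Q - P)).const_add P
      exact (hdiff t ht).hasFDerivAt.comp_hasDerivAt t h1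
    have h2 := intervalIntegral.integral_eq_sub_of_hasDerivAt hd (hii (Q - P))
    rw [h2]
    have e1 : P + (1:ℝ) • (Q - P) = Q := by rw [one_smul]; abel
    have e0 : P + (0:ℝ) • (Q - P) = P := by rw [zero_smul, add_zero]
    rw [e1, e0, hvP, hvQ, sub_zero]
  -- normal direction
  have hN : ∫ t in (0:ℝ)..1, fderiv ℝ v (P + t • (Q - P)) ((Q - P).2, -(Q - P).1) = 0 := by
    have hel : 0 < elen (Q - P) := aux_elen_pos hPQ
    have h0 : elen (Q - P)
        * ∫ t in (0:ℝ)..1, normalDeriv v P Q R (P + t • (Q - P)) = 0 := hn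
    have h1 : ∫ t in (0:ℝ)..1, normalDeriv v P Q R (P + t • (Q - P)) = 0 := by
      rcases mul_eq_zero.1 h0 with h | h
      · exact absurd h hel.ne'
      · exact h
    have hc0 : (if (Q - P).2 * (R - P).1 - (Q - P).1 * (R - P).2 ≤ 0 then (elen (Q - P))⁻¹
        else -(elen (Q - P))⁻¹) ≠ 0 := by
      split_ifs
      · exact inv_ne_zero hel.ne'
      · exact neg_ne_zero.2 (inv_ne_zero hel.ne')
    set c : ℝ := if (Q - P).2 * (R - P).1 - (Q - P).1 * (R - P).2 ≤ 0 then (elen (Q - P))⁻¹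
        else -(elen (Q - P))⁻¹ with hcdef
    have h2 : ∀ x : Pt, normalDeriv v P Q R x
        = c * fderiv ℝ v x ((Q - P).2, -(Q - P).1) := by
      intro x
      have ho : outNormal P Q R = c • (((Q - P).2, -(Q - P).1) : Pt) := rfl
      rw [normalDeriv, ho, (fderiv ℝ v x).map_smul, smul_eq_mul]
    rw [intervalIntegral.integral_congr (g := fun t =>
        c * fderiv ℝ v (P + t • (Q - P)) ((Q - P).2, -(Q - P).1)) (fun t _ => h2 _)] at h1
    rw [intervalIntegral.integral_const_mul] at h1
    rcases mul_eq_zero.1 h1 with h | h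
    · exact absurd h hc0
    · exact h
  -- decompose `w` in the basis (tangent, rotated tangent)
  have hden : (0:ℝ) < (Q - P).1 ^ 2 + (Q - P).2 ^ 2 := aux_sumsq_pos hPQ
  set α : ℝ := (w.1 * (Q - P).1 + w.2 * (Q - P).2) / ((Q - P).1 ^ 2 + (Q - P).2 ^ 2) with hα
  set β : ℝ := (w.1 * (Q - P).2 - w.2 * (Q - P).1) / ((Q - P).1 ^ 2 + (Q - P).2 ^ 2) with hβ
  have hw : w = α • (Q - P) + β • (((Q - P).2, -(Q - P).1) : Pt) := by
    apply Prod.ext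
    · simp only [Prod.fst_add, Prod.smul_fst, smul_eq_mul, hα, hβ]
      rw [div_mul_eq_mul_div, div_mul_eq_mul_div, ← add_div, eq_div_iff hden.ne']
      ring
    · simp only [Prod.snd_add, Prod.smul_snd, smul_eq_mul, hα, hβ]
      rw [div_mul_eq_mul_div, div_mul_eq_mul_div, ← add_div, eq_div_iff hden.ne']
      ring
  have hpt : ∀ x : Pt, fderiv ℝ v x w
      = α * fderiv ℝ v x (Q - P) + β * fderiv ℝ v x ((Q - P).2, -(Q - P).1) := by
    intro x
    conv_lhs => rw [hw]
    rw [(fderiv ℝ v x).map_add, (fderiv ℝ v x).map_smul, (fderiv ℝ v x).map_smul,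
      smul_eq_mul, smul_eq_mul]
  rw [intervalIntegral.integral_congr (g := fun t =>
      α * fderiv ℝ v (P + t • (Q - P)) (Q - P)
        + β * fderiv ℝ v (P + t • (Q - P)) ((Q - P).2, -(Q - P).1)) (fun t _ => hpt _)]
  rw [intervalIntegral.integral_add ((hii _).const_mul α) ((hii _).const_mul β),
    intervalIntegral.integral_const_mul, intervalIntegral.integral_const_mul, hT, hN,
    mul_zero, mul_zero, add_zero]

/-- Theorem 2, monotonicity of `C₀`: for `0 < b ≤ b̃`, if
`‖ṽ‖_{K̃} ≤ C ‖D²ṽ‖_{K̃}` for all `ṽ ∈ V_FM(K̃)` with `K̃` the triangle with third vertex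
`(a, b̃)`, then `‖v‖_K ≤ C ‖D²v‖_K` for all `v ∈ V_FM(K)` with third vertex `(a, b)`. -/
theorem stmt_13 (a b bt : ℝ) (hb : 0 < b) (hbbt : b ≤ bt) (C : ℝ) (hC : 0 ≤ C)
    (hup : ∀ v : Pt → ℝ, MemVFM v ((0, 0) : Pt) ((1, 0) : Pt) ((a, bt) : Pt) →
      l2norm v (Tri ((0, 0) : Pt) ((1, 0) : Pt) ((a, bt) : Pt)) ≤
        C * h2norm v (Tri ((0, 0) : Pt) ((1, 0) : Pt) ((a, bt) : Pt))) :
    ∀ v : Pt → ℝ, MemVFM v ((0, 0) : Pt) ((1, 0) : Pt) ((a, b) : Pt) →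
      l2norm v (Tri ((0, 0) : Pt) ((1, 0) : Pt) ((a, b) : Pt)) ≤
        C * h2norm v (Tri ((0, 0) : Pt) ((1, 0) : Pt) ((a, b) : Pt)) := by
  intro v hv
  obtain ⟨⟨U, hUo, hKU, hvU⟩, hO, hA, hB, he1, he2, he3⟩ := hv
  have hbt : (0:ℝ) < bt := lt_of_lt_of_le hb hbbt
  set s : ℝ := b / bt with hsdef
  have hs0 : 0 < s := div_pos hb hbt
  have hs1 : s ≤ 1 := (div_le_one hbt).2 hbbt
  have hsb : s * bt = b := div_mul_cancel₀ b hbt.ne'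
  set O : Pt := ((0,0) : Pt) with hOdef
  set A : Pt := ((1,0) : Pt) with hAdef
  set B : Pt := ((a,b) : Pt) with hBdef
  set Bt : Pt := ((a,bt) : Pt) with hBtdef
  set K : Set Pt := Tri O A B with hK
  set Kt : Set Pt := Tri O A Bt with hKt
  have himg : SL s '' Kt = K := by rw [hKt, hK, hOdef, hAdef, hBdef, hBtdef]; exact aux_tri_image hsb
  have hKtcomp : IsCompact Kt := by
    rw [hKt, Tri]
    exact Set.Finite.isCompact_convexHull (𝕜 := ℝ) (((Set.finite_singleton _).insert _).insert _)
  have hKtmeas : MeasurableSet Kt := hKtcomp.isClosed.measurableSet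
  set Ut : Set Pt := SL s ⁻¹' U with hUtdef
  have hUto : IsOpen Ut := hUo.preimage (SL s).continuous
  have hmemU : ∀ p ∈ Ut, SL s p ∈ U := fun p hp => by rwa [hUtdef, Set.mem_preimage] at hp
  have hKtU : Kt ⊆ Ut := by
    intro p hp
    rw [hUtdef, Set.mem_preimage]
    apply hKU
    rw [← himg]
    exact Set.mem_image_of_mem _ hp
  set ut : Pt → ℝ := fun p => v (SL s p) with hut
  have hSLO : SL s O = O := by rw [hOdef, SL_apply]; norm_num
  have hSLA : SL s A = A := by rw [hAdef, SL_apply]; norm_num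
  have hSLBt : SL s Bt = B := by
    rw [hBtdef, hBdef, SL_apply]
    simp [hsb]
  -- differentiability facts
  have hvdiff : ∀ q ∈ U, DifferentiableAt ℝ v q := fun q hq =>
    (hvU.differentiableOn two_ne_zero).differentiableAt (hUo.mem_nhds hq)
  have hdx1 : ContDiffOn ℝ 1 (pdx v) U := aux_contDiffOn_pdx hUo hvU
  have hdy1 : ContDiffOn ℝ 1 (pdy v) U := aux_contDiffOn_pdy hUo hvU
  have hdxdiff : ∀ q ∈ U, DifferentiableAt ℝ (pdx v) q := fun q hq =>
    (hdx1.differentiableOn one_ne_zero).differentiableAt (hUo.mem_nhds hq)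
  have hdydiff : ∀ q ∈ U, DifferentiableAt ℝ (pdy v) q := fun q hq =>
    (hdy1.differentiableOn one_ne_zero).differentiableAt (hUo.mem_nhds hq)
  -- first-order transfer
  have h1x : ∀ p ∈ Ut, pdx ut p = pdx v (SL s p) := by
    intro p hp
    rw [hut]
    exact aux_pdx_comp (hvdiff _ (hmemU p hp))
  have h1y : ∀ p ∈ Ut, pdy ut p = s * pdy v (SL s p) := by
    intro p hp
    rw [hut]
    exact aux_pdy_comp (hvdiff _ (hmemU p hp))
  -- second-order transfer
  have h2xx : ∀ p ∈ Ut, pdx (pdx ut) p = pdx (pdx v) (SL s p) := by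
    intro p hp
    have heq : pdx ut =ᶠ[nhds p] fun q => pdx v (SL s q) :=
      Filter.eventuallyEq_of_mem (hUto.mem_nhds hp) (fun q hq => h1x q hq)
    show fderiv ℝ (pdx ut) p ((1,0) : Pt) = pdx (pdx v) (SL s p)
    rw [heq.fderiv_eq]
    exact aux_pdx_comp (hdxdiff _ (hmemU p hp))
  have h2yx : ∀ p ∈ Ut, pdy (pdx ut) p = s * pdy (pdx v) (SL s p) := by
    intro p hp
    have heq : pdx ut =ᶠ[nhds p] fun q => pdx v (SL s q) :=
      Filter.eventuallyEq_of_mem (hUto.mem_nhds hp) (fun q hq => h1x q hq)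
    show fderiv ℝ (pdx ut) p ((0,1) : Pt) = s * pdy (pdx v) (SL s p)
    rw [heq.fderiv_eq]
    exact aux_pdy_comp (hdxdiff _ (hmemU p hp))
  have h2xy : ∀ p ∈ Ut, pdx (pdy ut) p = s * pdx (pdy v) (SL s p) := by
    intro p hp
    have heq : pdy ut =ᶠ[nhds p] fun q => s * pdy v (SL s q) :=
      Filter.eventuallyEq_of_mem (hUto.mem_nhds hp) (fun q hq => h1y q hq)
    show fderiv ℝ (pdy ut) p ((1,0) : Pt) = s * pdx (pdy v) (SL s p)
    rw [heq.fderiv_eq]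
    have hdc : DifferentiableAt ℝ (fun q => pdy v (SL s q)) p :=
      (hdydiff _ (hmemU p hp)).comp p (SL s).differentiableAt
    rw [fderiv_const_mul hdc s]
    simp only [ContinuousLinearMap.coe_smul', Pi.smul_apply, smul_eq_mul]
    congr 1
    exact aux_pdx_comp (hdydiff _ (hmemU p hp))
  have h2yy : ∀ p ∈ Ut, pdy (pdy ut) p = s * (s * pdy (pdy v) (SL s p)) := by
    intro p hp
    have heq : pdy ut =ᶠ[nhds p] fun q => s * pdy v (SL s q) :=
      Filter.eventuallyEq_of_mem (hUto.mem_nhds hp) (fun q hq => h1y q hq)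
    show fderiv ℝ (pdy ut) p ((0,1) : Pt) = s * (s * pdy (pdy v) (SL s p))
    rw [heq.fderiv_eq]
    have hdc : DifferentiableAt ℝ (fun q => pdy v (SL s q)) p :=
      (hdydiff _ (hmemU p hp)).comp p (SL s).differentiableAt
    rw [fderiv_const_mul hdc s]
    simp only [ContinuousLinearMap.coe_smul', Pi.smul_apply, smul_eq_mul]
    congr 1
    exact aux_pdy_comp (hdydiff _ (hmemU p hp))
  -- continuity of second partials
  have hcxx : ContinuousOn (pdx (pdx v)) U := aux_continuousOn_pdx hUo hdx1
  have hcyx : ContinuousOn (pdy (pdx v)) U := aux_continuousOn_pdy hUo hdx1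
  have hcxy : ContinuousOn (pdx (pdy v)) U := aux_continuousOn_pdx hUo hdy1
  have hcyy : ContinuousOn (pdy (pdy v)) U := aux_continuousOn_pdy hUo hdy1
  set F : Pt → ℝ := fun q => (pdx (pdx v) q) ^ 2 + (pdy (pdx v) q) ^ 2
      + (pdx (pdy v) q) ^ 2 + (pdy (pdy v) q) ^ 2 with hF
  have hFcont : ContinuousOn F U := by
    rw [hF]
    exact (((hcxx.pow 2).add (hcyx.pow 2)).add (hcxy.pow 2)).add (hcyy.pow 2)
  have hFSL : ContinuousOn (fun p => F (SL s p)) Ut :=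
    hFcont.comp (SL s).continuous.continuousOn hmemU
  have hFSLint : IntegrableOn (fun p => F (SL s p)) Kt :=
    ContinuousOn.integrableOn_compact hKtcomp (hFSL.mono hKtU)
  set G : Pt → ℝ := fun p => (pdx (pdx v) (SL s p)) ^ 2 + s ^ 2 * (pdy (pdx v) (SL s p)) ^ 2
      + s ^ 2 * (pdx (pdy v) (SL s p)) ^ 2 + s ^ 4 * (pdy (pdy v) (SL s p)) ^ 2 with hG
  have hGcont : ContinuousOn G Ut := by
    rw [hG]
    have c1 : ContinuousOn (fun p => pdx (pdx v) (SL s p)) Ut :=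
      hcxx.comp (SL s).continuous.continuousOn hmemU
    have c2 : ContinuousOn (fun p => pdy (pdx v) (SL s p)) Ut :=
      hcyx.comp (SL s).continuous.continuousOn hmemU
    have c3 : ContinuousOn (fun p => pdx (pdy v) (SL s p)) Ut :=
      hcxy.comp (SL s).continuous.continuousOn hmemU
    have c4 : ContinuousOn (fun p => pdy (pdy v) (SL s p)) Ut :=
      hcyy.comp (SL s).continuous.continuousOn hmemU
    exact (((c1.pow 2).add (continuousOn_const.mul (c2.pow 2))).add
      (continuousOn_const.mul (c3.pow 2))).add (continuousOn_const.mul (c4.pow 2))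
  have hGint : IntegrableOn G Kt :=
    ContinuousOn.integrableOn_compact hKtcomp (hGcont.mono hKtU)
  have hh2eq : h2sq ut Kt = ∫ p in Kt, G p := by
    unfold h2sq
    apply MeasureTheory.setIntegral_congr_fun hKtmeas
    intro p hp
    have hp' : p ∈ Ut := hKtU hp
    simp only [hG]
    rw [h2xx p hp', h2yx p hp', h2xy p hp', h2yy p hp']
    ring
  have hGF : ∀ p ∈ Kt, G p ≤ F (SL s p) := by
    intro p hp
    simp only [hG, hF]
    have hs2 : s ^ 2 ≤ 1 := by nlinarith
    have hs4 : s ^ 4 ≤ 1 := by nlinarith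
    have t2 : s ^ 2 * (pdy (pdx v) (SL s p)) ^ 2 ≤ (pdy (pdx v) (SL s p)) ^ 2 :=
      mul_le_of_le_one_left (sq_nonneg _) hs2
    have t3 : s ^ 2 * (pdx (pdy v) (SL s p)) ^ 2 ≤ (pdx (pdy v) (SL s p)) ^ 2 :=
      mul_le_of_le_one_left (sq_nonneg _) hs2
    have t4 : s ^ 4 * (pdy (pdy v) (SL s p)) ^ 2 ≤ (pdy (pdy v) (SL s p)) ^ 2 :=
      mul_le_of_le_one_left (sq_nonneg _) hs4
    exact add_le_add (add_le_add (add_le_add le_rfl t2) t3) t4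
  have hle2 : h2sq ut Kt ≤ ∫ p in Kt, F (SL s p) := by
    rw [hh2eq]
    exact MeasureTheory.setIntegral_mono_on hGint hFSLint hKtmeas hGF
  have hcov2 : h2sq v K = s * ∫ p in Kt, F (SL s p) := by
    unfold h2sq
    rw [← hF, ← himg, aux_cov hs0 F hKtmeas]
  have hfinal2 : s * h2sq ut Kt ≤ h2sq v K := by
    rw [hcov2]
    exact mul_le_mul_of_nonneg_left hle2 hs0.le
  have hl2 : l2sq v K = s * l2sq ut Kt := by
    unfold l2sq
    rw [← himg, aux_cov hs0 (fun p => (v p) ^ 2) hKtmeas]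
  -- membership of the stretched function in V_FM of the tall triangle
  have hOK : O ∈ K := by rw [hK, Tri]; exact subset_convexHull ℝ _ (by simp)
  have hAK : A ∈ K := by rw [hK, Tri]; exact subset_convexHull ℝ _ (by simp)
  have hBK : B ∈ K := by rw [hK, Tri]; exact subset_convexHull ℝ _ (by simp)
  have hOKt : O ∈ Kt := by rw [hKt, Tri]; exact subset_convexHull ℝ _ (by simp)
  have hAKt : A ∈ Kt := by rw [hKt, Tri]; exact subset_convexHull ℝ _ (by simp)
  have hBtKt : Bt ∈ Kt := by rw [hKt, Tri]; exact subset_convexHull ℝ _ (by simp)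
  have hneOA : A - O ≠ 0 := by
    rw [hAdef, hOdef]
    intro h
    have h2 := congrArg Prod.fst h
    simp only [Prod.fst_sub, Prod.fst_zero] at h2
    norm_num at h2
  have hneAB : B - A ≠ 0 := by
    rw [hBdef, hAdef]
    intro h
    have h2 := congrArg Prod.snd h
    simp only [Prod.snd_sub, Prod.snd_zero] at h2
    norm_num at h2
    exact hb.ne' h2
  have hneBO : O - B ≠ 0 := by
    rw [hBdef, hOdef]
    intro h
    have h2 := congrArg Prod.snd h
    simp only [Prod.snd_sub, Prod.snd_zero] at h2
    norm_num at h2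
    exact hb.ne' h2
  have hedge : ∀ Pt' Qt' Rt' P' Q' R' : Pt, SL s Pt' = P' → SL s Qt' = Q' →
      P' ∈ K → Q' ∈ K → Pt' ∈ Kt → Qt' ∈ Kt → Q' - P' ≠ 0 → v P' = 0 → v Q' = 0 →
      edgeInt (normalDeriv v P' Q' R') P' Q' = 0 →
      edgeInt (normalDeriv ut Pt' Qt' Rt') Pt' Qt' = 0 := by
    intro Pt' Qt' Rt' P' Q' R' hP hQ hPK hQK hPtK hQtK hne hvP hvQ hn
    unfold edgeInt
    have hseg : ∀ t : ℝ, t ∈ Set.uIcc (0:ℝ) 1 → P' + t • (Q' - P') ∈ U := by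
      intro t ht
      exact hKU (aux_seg_mem hPK hQK t ht)
    have hcongr : Set.EqOn (fun t : ℝ => normalDeriv ut Pt' Qt' Rt' (Pt' + t • (Qt' - Pt')))
        (fun t : ℝ => fderiv ℝ v (P' + t • (Q' - P')) (SL s (outNormal Pt' Qt' Rt')))
        (Set.uIcc (0:ℝ) 1) := by
      intro t ht
      have hpt : Pt' + t • (Qt' - Pt') ∈ Kt := aux_seg_mem hPtK hQtK t ht
      have hSLpt : SL s (Pt' + t • (Qt' - Pt')) = P' + t • (Q' - P') := by
        rw [(SL s).map_add, (SL s).map_smul, (SL s).map_sub, hP, hQ]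
      show normalDeriv ut Pt' Qt' Rt' (Pt' + t • (Qt' - Pt')) = _
      unfold normalDeriv
      rw [hut, aux_fderiv_comp_SL (hvdiff _ (hmemU _ (hKtU hpt))),
        ContinuousLinearMap.comp_apply, hSLpt]
    rw [intervalIntegral.integral_congr hcongr,
      aux_edge_grad_int_zero hUo hvU hne hseg hvP hvQ hn (SL s (outNormal Pt' Qt' Rt')),
      mul_zero]
  have hmemVFM : MemVFM ut O A Bt := by
    refine ⟨⟨Ut, hUto, hKtU, ?_⟩, ?_, ?_, ?_, ?_, ?_, ?_⟩
    · rw [hut]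
      exact hvU.comp (SL s).contDiff.contDiffOn (fun p hp => hp)
    · show v (SL s O) = 0
      rw [hSLO]; exact hO
    · show v (SL s A) = 0
      rw [hSLA]; exact hA
    · show v (SL s Bt) = 0
      rw [hSLBt]; exact hB
    · exact hedge O A Bt O A B hSLO hSLA hOK hAK hOKt hAKt hneOA hO hA he1
    · exact hedge A Bt O A B O hSLA hSLBt hAK hBK hAKt hBtKt hneAB hA hB he2
    · exact hedge Bt O A B O A hSLBt hSLO hBK hOK hBtKt hOKt hneBO hB hO he3
  have hup' : l2norm ut Kt ≤ C * h2norm ut Kt := hup ut hmemVFM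
  calc l2norm v K = Real.sqrt (s * l2sq ut Kt) := by rw [l2norm, hl2]
    _ = Real.sqrt s * Real.sqrt (l2sq ut Kt) := Real.sqrt_mul hs0.le _
    _ = Real.sqrt s * l2norm ut Kt := rfl
    _ ≤ Real.sqrt s * (C * h2norm ut Kt) :=
        mul_le_mul_of_nonneg_left hup' (Real.sqrt_nonneg s)
    _ = C * (Real.sqrt s * Real.sqrt (h2sq ut Kt)) := by rw [h2norm]; ring
    _ = C * Real.sqrt (s * h2sq ut Kt) := by rw [← Real.sqrt_mul hs0.le]
    _ ≤ C * Real.sqrt (h2sq v K) := mul_le_mul_of_nonneg_left (Real.sqrt_le_sqrt hfinal2) hC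
    _ = C * h2norm v K := rfl
end
end
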